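/- arXiv:1302.0569 — 8 statements merged into one kernel-verified Lean document; each statement's English description precedes it below -/
import Mathlib

section
/- Let f be a quadratic form in s variables over GF(q) of rank r, where q = p^e. If r is odd and e is odd, then Σ_{y∈GF(p)^*} Σ_{x∈GF(q)^s} ζ_p^{Tr_{q/p}(y·f(x))} = 0. -/
/-- The fixed primitive `p`-th root of unity `ζ_p = exp(2πi/p)` raised to the power
`t ∈ GF(p)`, i.e. `ζ_p^t = exp(2πi·t/p)`. -/
noncomputable def zetaPow (p : ℕ) (t : ZMod p) : ℂ :=
  Complex.exp (2 * Real.pi * Complex.I * (t.val : ℂ) / p)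

open Finset

lemma zetaPow_eq_pow (p : ℕ) (t : ZMod p) :
    zetaPow p t = Complex.exp (2 * Real.pi * Complex.I / p) ^ t.val := by
  rw [← Complex.exp_nat_mul, zetaPow]
  congr 1
  ring

lemma geom_sum_nat (p : ℕ) (hp : 1 ≤ p) (e : ℕ) :
    (p - 1) * (∑ i ∈ Finset.range e, p ^ i) = p ^ e - 1 := by
  induction e with
  | zero => simp
  | succ e ih =>
    rw [Finset.sum_range_succ, Nat.mul_add, ih]
    have h1 : 1 ≤ p ^ e := Nat.one_le_pow _ _ hp
    have h3 : (p - 1) * p ^ e = p * p ^ e - p ^ e := by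
      rw [Nat.sub_mul, one_mul]
    have h4 : p ^ (e + 1) = p * p ^ e := by rw [pow_succ]; ring
    have h5 : p ^ e ≤ p * p ^ e := Nat.le_mul_of_pos_left _ (by omega)
    omega

lemma addChar_map_sum {A M ι : Type*} [AddCommMonoid A] [CommMonoid M] (ψ : AddChar A M)
    (s : Finset ι) (g : ι → A) : ψ (∑ i ∈ s, g i) = ∏ i ∈ s, ψ (g i) := by
  induction s using Finset.cons_induction with
  | empty => simp
  | cons i s hi ih => rw [Finset.sum_cons, Finset.prod_cons, AddChar.map_add_eq_mul, ih]

/-- The additive character `t ↦ ζ_p^t` on `ZMod p`. -/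
noncomputable def psiZMod (p : ℕ) [Fact p.Prime] : AddChar (ZMod p) ℂ where
  toFun t := zetaPow p t
  map_zero_eq_one' := by
    have : ((0 : ZMod p).val : ℂ) = 0 := by
      rw [ZMod.val_zero]; norm_num
    simp [zetaPow, this]
  map_add_eq_mul' a b := by
    have hp : p ≠ 0 := (Fact.out : p.Prime).ne_zero
    have hζ : IsPrimitiveRoot (Complex.exp (2 * Real.pi * Complex.I / p)) p :=
      Complex.isPrimitiveRoot_exp p hp
    simp only [zetaPow_eq_pow]
    rw [ZMod.val_add, ← pow_add]
    conv_rhs => rw [← Nat.mod_add_div (a.val + b.val) p]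
    rw [pow_add, pow_mul, hζ.pow_eq_one, one_pow, mul_one]

/-- Let `p` be an odd prime, `q = p^e`, and `f` a quadratic form in `s`
variables over `K = GF(q)` of rank `r` (i.e. the set
`V = {x | f(x+z) - f(x) - f(z) = 0 for all z}` has cardinality `q^(s-r)`).  If `r` is odd
and `e` is odd, then `Σ_{y ∈ GF(p)^*} Σ_{x ∈ GF(q)^s} ζ_p^{Tr_{q/p}(y·f(x))} = 0`. -/
theorem stmt_3 (p e s r : ℕ) [Fact p.Prime] (hodd : Odd p)
    (he : 0 < e) (hs : 0 < s)
    (K : Type*) [Field K] [Fintype K] [Algebra (ZMod p) K]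
    (hK : Fintype.card K = p ^ e)
    (f : (Fin s → K) → K)
    (hquad : ∃ a : Fin s → Fin s → K, ∀ x : Fin s → K,
      f x = ∑ i : Fin s, ∑ j : Fin s, if i ≤ j then a i j * x i * x j else 0)
    (hr : r ≤ s)
    (hrank : Nat.card {x : Fin s → K // ∀ z : Fin s → K, f (x + z) - f x - f z = 0}
      = (p ^ e) ^ (s - r))
    (hrodd : Odd r) (heodd : Odd e) :
    ∑ y ∈ Finset.univ \ {(0 : ZMod p)}, ∑ x : Fin s → K,
      zetaPow p (Algebra.trace (ZMod p) K (algebraMap (ZMod p) K y * f x)) = 0 := by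
  classical
  obtain ⟨a, ha⟩ := hquad
  have hp : p.Prime := Fact.out
  have hp1 : 1 < p := hp.one_lt
  have hp2 : p ≠ 2 := by
    rintro rfl
    exact (Nat.not_odd_iff_even.mpr even_two) hodd
  have hp3 : 3 ≤ p := by
    have := hp.two_le
    omega
  -- characteristic of K
  have hinj : Function.Injective (algebraMap (ZMod p) K) := (algebraMap (ZMod p) K).injective
  haveI hcharK : CharP K p := charP_of_injective_ringHom hinj p
  have hringK : ringChar K = p := by
    rw [ringChar.eq K p]
  have hring2 : ringChar K ≠ 2 := by rw [hringK]; exact hp2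
  have h2K : (2 : K) ≠ 0 := by
    intro h
    have h' : ((2 : ℕ) : K) = 0 := by exact_mod_cast h
    have hdvd : p ∣ 2 := (CharP.cast_eq_zero_iff K p 2).mp h'
    have := Nat.le_of_dvd (by norm_num) hdvd
    omega
  haveI : Invertible (2 : K) := invertibleOfNonzero h2K
  -- the quadratic form Q equal to f
  set Q : QuadraticForm K (Fin s → K) :=
    ∑ i : Fin s, ∑ j : Fin s, (if i ≤ j then a i j else 0) • QuadraticMap.proj i j with hQdef
  have hQ : ∀ x, Q x = f x := by
    intro x
    rw [ha x, hQdef]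
    rw [QuadraticMap.sum_apply]
    refine Finset.sum_congr rfl fun i _ => ?_
    rw [QuadraticMap.sum_apply]
    refine Finset.sum_congr rfl fun j _ => ?_
    rw [QuadraticMap.smul_apply, QuadraticMap.proj_apply, smul_eq_mul, ite_mul, zero_mul,
      mul_assoc]
  -- diagonalize
  have hfr : Module.finrank K (Fin s → K) = s := Module.finrank_fin_fun K
  obtain ⟨w, ⟨φ⟩⟩ := QuadraticForm.equivalent_weightedSumSquares Q
  revert w φ
  rw [hfr]
  intro w φ
  set ψφ : (Fin s → K) ≃ₗ[K] (Fin s → K) := φ.toLinearEquiv with hψφ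
  have hφeq : ∀ x, φ x = ψφ x := fun x => rfl
  have hfx : ∀ x, f x = ∑ i, w i * (ψφ x i * ψφ x i) := by
    intro x
    rw [← hQ x, ← φ.map_app x, QuadraticMap.weightedSumSquares_apply]
    simp only [smul_eq_mul, hφeq]
  -- polar form identity
  have hpolar : ∀ x z : Fin s → K,
      f (x + z) - f x - f z = ∑ i, 2 * (w i * (ψφ x i * ψφ z i)) := by
    intro x z
    rw [hfx, hfx, hfx, ← Finset.sum_sub_distrib, ← Finset.sum_sub_distrib]
    refine Finset.sum_congr rfl fun i _ => ?_
    have hadd : ψφ (x + z) = ψφ x + ψφ z := map_add ψφ x z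
    rw [hadd]
    simp only [Pi.add_apply]
    ring
  -- the radical condition
  have hiff : ∀ x : Fin s → K,
      (∀ z, f (x + z) - f x - f z = 0) ↔ (∀ i, w i * ψφ x i = 0) := by
    intro x
    constructor
    · intro H i
      have hz := H (ψφ.symm (Pi.single i (1 : K)))
      rw [hpolar] at hz
      rw [ψφ.apply_symm_apply] at hz
      have : ∑ j, 2 * (w j * (ψφ x j * (Pi.single i (1 : K) : Fin s → K) j)) = 2 * (w i * ψφ x i) := by
        rw [Finset.sum_eq_single i]
        · simp
        · intro j _ hji
          simp [Pi.single_apply, hji]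
        · intro h; exact absurd (Finset.mem_univ i) h
      rw [this] at hz
      rcases mul_eq_zero.mp hz with h | h
      · exact absurd h h2K
      · exact h
    · intro H z
      rw [hpolar]
      refine Finset.sum_eq_zero fun i _ => ?_
      have : w i * (ψφ x i * ψφ z i) = (w i * ψφ x i) * ψφ z i := by ring
      rw [this, H i, zero_mul, mul_zero]
  -- the zero set of w
  set Z : Finset (Fin s) := univ.filter (fun i => w i = 0) with hZdef
  set NZ : Finset (Fin s) := univ.filter (fun i => ¬ w i = 0) with hNZdef
  have hq1 : 1 < p ^ e := Nat.one_lt_pow (by omega) hp1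
  have hZcard : Z.card = s - r := by
    have hcard1 : Nat.card {x : Fin s → K // ∀ z, f (x + z) - f x - f z = 0}
        = Nat.card {u : Fin s → K // ∀ i, w i * u i = 0} := by
      refine Nat.card_congr (Equiv.subtypeEquiv ψφ.toEquiv fun x => ?_)
      rw [hiff x]
      rfl
    have hcard2 : Nat.card {u : Fin s → K // ∀ i, w i * u i = 0}
        = ∏ i : Fin s, Nat.card {t : K // w i * t = 0} := by
      rw [← Nat.card_pi]
      exact Nat.card_congr (Equiv.subtypePiEquivPi (p := fun (i : Fin s) (t : K) => w i * t = 0))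
    have hcard3 : ∀ i : Fin s, Nat.card {t : K // w i * t = 0}
        = if w i = 0 then p ^ e else 1 := by
      intro i
      split_ifs with h
      · rw [← hK, ← Nat.card_eq_fintype_card]
        exact Nat.card_congr (Equiv.subtypeUnivEquiv (fun t => by rw [h, zero_mul]))
      · have : {t : K // w i * t = 0} ≃ {t : K // t = 0} :=
          Equiv.subtypeEquivRight (fun t => by
            constructor
            · intro ht
              rcases mul_eq_zero.mp ht with h' | h'
              · exact absurd h' h
              · exact h'
            · intro ht; rw [ht, mul_zero])
        rw [Nat.card_congr this, Nat.card_unique]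
    have hprod : ∏ i : Fin s, Nat.card {t : K // w i * t = 0} = (p ^ e) ^ Z.card := by
      calc ∏ i : Fin s, Nat.card {t : K // w i * t = 0}
          = ∏ i : Fin s, (if w i = 0 then p ^ e else 1) :=
            Finset.prod_congr rfl fun i _ => hcard3 i
        _ = (∏ i ∈ Z, p ^ e) * ∏ i ∈ NZ, 1 := by
            rw [Finset.prod_ite, ← hZdef, ← hNZdef]
        _ = (p ^ e) ^ Z.card := by rw [Finset.prod_const, Finset.prod_const_one, mul_one]
    have : (p ^ e) ^ Z.card = (p ^ e) ^ (s - r) := by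
      rw [← hprod, ← hcard2, ← hcard1, hrank]
    exact Nat.pow_right_injective hq1 this
  have hNZcard : NZ.card = r := by
    have h1 := Finset.card_filter_add_card_filter_not
      (s := (univ : Finset (Fin s))) (p := fun i => w i = 0)
    have h2 : (univ : Finset (Fin s)).card = s := by
      rw [Finset.card_univ, Fintype.card_fin]
    rw [← hZdef, ← hNZdef] at h1
    omega
  -- additive characters
  set ζ : ℂ := Complex.exp (2 * Real.pi * Complex.I / p) with hζdef
  have hζ : IsPrimitiveRoot ζ p := Complex.isPrimitiveRoot_exp p hp.ne_zero
  set ψ : AddChar K ℂ :=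
    (psiZMod p).compAddMonoidHom (Algebra.trace (ZMod p) K).toAddMonoidHom with hψdef
  have hψapp : ∀ t : K, ψ t = zetaPow p (Algebra.trace (ZMod p) K t) := fun t => rfl
  -- trace is surjective
  haveI : FiniteDimensional (ZMod p) K := Module.Finite.of_finite
  haveI : Algebra.IsAlgebraic (ZMod p) K := Algebra.IsAlgebraic.of_finite (ZMod p) K
  haveI : Algebra.IsSeparable (ZMod p) K := inferInstance
  obtain ⟨c₀, hc₀⟩ := Algebra.trace_surjective (ZMod p) K 1
  have hψne : ψ ≠ 0 := by
    rw [← AddChar.one_eq_zero, AddChar.ne_one_iff]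
    refine ⟨c₀, ?_⟩
    haveI : Fact (1 < p) := ⟨hp1⟩
    rw [hψapp, hc₀, zetaPow_eq_pow]
    rw [ZMod.val_one, pow_one]
    exact hζ.ne_one hp1
  have hsum0 : ∑ t : K, ψ t = 0 := AddChar.sum_eq_zero_iff_ne_zero.mpr hψne
  have hsum_mul : ∀ b : K, b ≠ 0 → ∑ t : K, ψ (b * t) = 0 := by
    intro b hb
    rw [← hsum0]
    exact Fintype.sum_equiv (Equiv.mulLeft₀ b hb) (fun t => ψ (b * t)) (fun t => ψ t)
      (fun t => rfl)
  -- quadratic character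
  set η : K → ℂ := fun t => ((quadraticChar K t : ℤ) : ℂ) with hηdef
  have hηmul : ∀ x y : K, η (x * y) = η x * η y := by
    intro x y
    simp only [hηdef, map_mul]
    push_cast
    ring
  have hηpm : ∀ b : K, b ≠ 0 → η b = 1 ∨ η b = -1 := by
    intro b hb
    rcases quadraticChar_dichotomy hb with h | h
    · left; rw [hηdef]; simp [h]
    · right; rw [hηdef]; simp [h]
  have hηsq : ∀ b : K, b ≠ 0 → η b * η b = 1 := by
    intro b hb
    rcases hηpm b hb with h | h <;> rw [h] <;> norm_num
  -- the Gauss sum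
  set g𝔤 : ℂ := ∑ v : K, η v * ψ v with hgdef
  have hGauss : ∀ b : K, b ≠ 0 → ∑ t : K, ψ (b * (t * t)) = η b * g𝔤 := by
    intro b hb
    have step1 : ∑ t : K, ψ (b * (t * t))
        = ∑ u : K, ((univ.filter (fun t : K => t * t = u)).card : ℂ) * ψ (b * u) := by
      rw [← Finset.sum_fiberwise' univ (fun t : K => t * t) (fun u => ψ (b * u))]
      refine Finset.sum_congr rfl fun u _ => ?_
      rw [Finset.sum_const, nsmul_eq_mul]
    have step2 : ∀ u : K,
        ((univ.filter (fun t : K => t * t = u)).card : ℂ) = η u + 1 := by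
      intro u
      have h1 : univ.filter (fun t : K => t * t = u) = {x : K | x ^ 2 = u}.toFinset := by
        rw [Set.toFinset_setOf]
        exact Finset.filter_congr (fun t _ => by rw [pow_two])
      have h2 := quadraticChar_card_sqrts hring2 u
      rw [h1]
      simp only [hηdef]
      have h3 : (({x : K | x ^ 2 = u}.toFinset.card : ℤ) : ℂ) = ((quadraticChar K u : ℤ) : ℂ) + 1 := by
        rw [h2]; push_cast; ring
      exact_mod_cast h3
    have step3 : ∑ t : K, ψ (b * (t * t)) = ∑ u : K, η u * ψ (b * u) := by
      rw [step1]
      have : ∑ u : K, ((univ.filter (fun t : K => t * t = u)).card : ℂ) * ψ (b * u)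
          = ∑ u : K, (η u + 1) * ψ (b * u) :=
        Finset.sum_congr rfl fun u _ => by rw [step2 u]
      rw [this]
      simp only [add_mul, one_mul]
      rw [Finset.sum_add_distrib, hsum_mul b hb, add_zero]
    rw [step3]
    have step4 : ∀ u : K, η u * ψ (b * u) = η b * (η (b * u) * ψ (b * u)) := by
      intro u
      rw [hηmul b u, ← mul_assoc, ← mul_assoc, hηsq b hb, one_mul]
    calc ∑ u : K, η u * ψ (b * u) = ∑ u : K, η b * (η (b * u) * ψ (b * u)) :=
          Finset.sum_congr rfl fun u _ => step4 u
      _ = η b * ∑ u : K, η (b * u) * ψ (b * u) := by rw [Finset.mul_sum]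
      _ = η b * g𝔤 := by
          rw [hgdef]
          congr 1
          exact Fintype.sum_equiv (Equiv.mulLeft₀ b hb) (fun u => η (b * u) * ψ (b * u))
            (fun v => η v * ψ v) (fun u => rfl)
  -- the main per-y computation
  set C : ℂ := ((p : ℂ) ^ e) ^ (s - r) * ((∏ i ∈ NZ, η (w i)) * g𝔤 ^ r) with hCdef
  have hkey : ∀ y : ZMod p, y ≠ 0 →
      ∑ x : Fin s → K, ψ (algebraMap (ZMod p) K y * f x)
        = η (algebraMap (ZMod p) K y) * C := by
    intro y hy
    set c : K := algebraMap (ZMod p) K y with hc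
    have hcne : c ≠ 0 := by
      intro h
      apply hy
      apply hinj
      rw [← hc, h, map_zero]
    have e1 : ∑ x : Fin s → K, ψ (c * f x)
        = ∑ x : Fin s → K, ∏ i, ψ (c * w i * (ψφ x i * ψφ x i)) := by
      refine Finset.sum_congr rfl fun x _ => ?_
      rw [hfx x, Finset.mul_sum]
      rw [addChar_map_sum]
      exact Finset.prod_congr rfl fun i _ => by rw [mul_assoc]
    have e2 : ∑ x : Fin s → K, ∏ i, ψ (c * w i * (ψφ x i * ψφ x i))
        = ∑ u : Fin s → K, ∏ i, ψ (c * w i * (u i * u i)) :=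
      Fintype.sum_equiv ψφ.toEquiv
        (fun x => ∏ i, ψ (c * w i * (ψφ x i * ψφ x i)))
        (fun u => ∏ i, ψ (c * w i * (u i * u i))) (fun x => rfl)
    have e3 : ∑ u : Fin s → K, ∏ i, ψ (c * w i * (u i * u i))
        = ∏ i, ∑ t : K, ψ (c * w i * (t * t)) := by
      rw [Finset.prod_univ_sum, Fintype.piFinset_univ]
    have e4 : ∏ i, ∑ t : K, ψ (c * w i * (t * t))
        = ∏ i : Fin s, (if w i = 0 then ((p : ℂ) ^ e) else η c * η (w i) * g𝔤) := by
      refine Finset.prod_congr rfl fun i _ => ?_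
      split_ifs with h
      · rw [h, mul_zero]
        simp only [zero_mul, AddChar.map_zero_eq_one]
        rw [Finset.sum_const, Finset.card_univ, hK, nsmul_eq_mul, mul_one]
        push_cast
        ring
      · rw [hGauss _ (mul_ne_zero hcne h), hηmul]
    have e5 : ∏ i : Fin s, (if w i = 0 then ((p : ℂ) ^ e) else η c * η (w i) * g𝔤)
        = η c * C := by
      rw [Finset.prod_ite, ← hZdef, ← hNZdef]
      rw [Finset.prod_const]
      have : ∏ i ∈ NZ, (η c * η (w i) * g𝔤)
          = (η c) ^ NZ.card * ((∏ i ∈ NZ, η (w i)) * g𝔤 ^ NZ.card) := by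
        rw [Finset.prod_mul_distrib, Finset.prod_mul_distrib, Finset.prod_const,
          Finset.prod_const]
        ring
      rw [this, hZcard, hNZcard]
      have hcr : (η c) ^ r = η c := by
        rcases hηpm c hcne with h | h <;> rw [h]
        · rw [one_pow]
        · rw [Odd.neg_one_pow hrodd]
      rw [hcr, hCdef]
      ring
    rw [e1, e2, e3, e4, e5]
  -- comparison of quadratic characters
  have hringZ : ringChar (ZMod p) ≠ 2 := by
    rw [ZMod.ringChar_zmod_n]; exact hp2
  have hcompat : ∀ y : ZMod p, y ≠ 0 →
      η (algebraMap (ZMod p) K y) = ((quadraticChar (ZMod p) y : ℤ) : ℂ) := by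
    intro y hy
    set b : K := algebraMap (ZMod p) K y with hb
    have hbne : b ≠ 0 := by
      intro h
      apply hy
      apply hinj
      rw [← hb, h, map_zero]
    by_cases hsq : IsSquare y
    · have hsb : IsSquare b := hsq.map (algebraMap (ZMod p) K)
      rw [hηdef]
      simp only
      rw [(quadraticChar_one_iff_isSquare hbne).mpr hsb,
        (quadraticChar_one_iff_isSquare hy).mpr hsq]
    · -- y is a nonsquare; we show b is a nonsquare too
      have hyp2 : y ^ (p / 2) = -1 := by
        have hcardZ : Fintype.card (ZMod p) = p := ZMod.card p
        have hiffZ := FiniteField.isSquare_iff hringZ hy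
        rw [hcardZ] at hiffZ
        have hne1 : y ^ (p / 2) ≠ 1 := fun h => hsq (hiffZ.mpr h)
        have hsq1 : y ^ (p / 2) * y ^ (p / 2) = 1 := by
          rw [← pow_add]
          have hmod : p % 2 = 1 := Nat.odd_iff.mp hodd
          have : p / 2 + p / 2 = p - 1 := by omega
          rw [this]
          exact ZMod.pow_card_sub_one_eq_one hy
        rcases mul_self_eq_one_iff.mp hsq1 with h | h
        · exact absurd h hne1
        · exact h
      set E : ℕ := ∑ i ∈ Finset.range e, p ^ i with hEdef
      have hEodd : Odd E := by
        rw [Nat.odd_iff]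
        rw [hEdef, Finset.sum_nat_mod]
        have : ∀ i ∈ Finset.range e, p ^ i % 2 = 1 := fun i _ =>
          Nat.odd_iff.mp (hodd.pow)
        rw [Finset.sum_congr rfl this]
        rw [Finset.sum_const, Finset.card_range, smul_eq_mul, mul_one]
        exact Nat.odd_iff.mp heodd
      have hgeo : (p - 1) * E = p ^ e - 1 := geom_sum_nat p (by omega) e
      have hmodp : p % 2 = 1 := Nat.odd_iff.mp hodd
      have h2half : 2 * (p / 2) = p - 1 := by omega
      have hEm : 2 * ((p / 2) * E) = p ^ e - 1 := by
        calc 2 * ((p / 2) * E) = (2 * (p / 2)) * E := by ring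
          _ = (p - 1) * E := by rw [h2half]
          _ = p ^ e - 1 := hgeo
      have hpe1 : 1 ≤ p ^ e := Nat.one_le_pow _ _ (by omega)
      have hpeodd : p ^ e % 2 = 1 := Nat.odd_iff.mp (hodd.pow)
      have hhalf : Fintype.card K / 2 = (p / 2) * E := by
        rw [hK]; omega
      have hbpow : b ^ (Fintype.card K / 2) = -1 := by
        rw [hhalf, hb, pow_mul, ← map_pow, hyp2, map_neg, map_one, Odd.neg_one_pow hEodd]
      have hsb : ¬ IsSquare b := by
        intro hB
        have := (FiniteField.isSquare_iff hring2 hbne).mp hB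
        rw [hbpow] at this
        have hne : (-1 : K) ≠ 1 := by
          intro h
          have : (2 : K) = 0 := by linear_combination -h
          exact h2K this
        exact hne this
      rw [hηdef]
      simp only
      rw [quadraticChar_neg_one_iff_not_isSquare.mpr hsb,
        quadraticChar_neg_one_iff_not_isSquare.mpr hsq]
  -- final assembly
  have hconv : ∀ y : ZMod p, ∑ x : Fin s → K,
      zetaPow p (Algebra.trace (ZMod p) K (algebraMap (ZMod p) K y * f x))
      = ∑ x : Fin s → K, ψ (algebraMap (ZMod p) K y * f x) :=
    fun y => Finset.sum_congr rfl fun x _ => (hψapp _).symm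
  calc ∑ y ∈ Finset.univ \ {(0 : ZMod p)}, ∑ x : Fin s → K,
        zetaPow p (Algebra.trace (ZMod p) K (algebraMap (ZMod p) K y * f x))
      = ∑ y ∈ Finset.univ \ {(0 : ZMod p)},
          ((quadraticChar (ZMod p) y : ℤ) : ℂ) * C := by
        refine Finset.sum_congr rfl fun y hy => ?_
        have hy0 : y ≠ 0 := by
          rw [Finset.mem_sdiff, Finset.mem_singleton] at hy
          exact hy.2
        rw [hconv y, hkey y hy0, hcompat y hy0]
    _ = (∑ y ∈ Finset.univ \ {(0 : ZMod p)}, ((quadraticChar (ZMod p) y : ℤ) : ℂ)) * C := by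
        rw [← Finset.sum_mul]
    _ = 0 := by
        have hsd : (Finset.univ \ {(0 : ZMod p)}) = Finset.univ.erase 0 := by
          rw [← Finset.sdiff_singleton_eq_erase]
        have hzero : ((quadraticChar (ZMod p) (0 : ZMod p) : ℤ) : ℂ) = 0 := by
          rw [quadraticChar_zero]; norm_num
        rw [hsd, Finset.sum_erase (f := fun y : ZMod p => ((quadraticChar (ZMod p) y : ℤ) : ℂ))
          _ hzero]
        have : ∑ y : ZMod p, ((quadraticChar (ZMod p) y : ℤ) : ℂ)
            = ((∑ y : ZMod p, (quadraticChar (ZMod p) y : ℤ) : ℤ) : ℂ) := by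
          push_cast
          rfl
        rw [this, quadraticChar_sum_zero hringZ]
        norm_num
end

section
/- For any (a,b) ∈ GF(p^m)² with (a,b) ≠ (0,0), the GF(q)-subspace V_{a,b} = {x ∈ GF(p^m) : Q_{a,b}(x+z) − Q_{a,b}(x) − Q_{a,b}(z) = 0 for all z ∈ GF(p^m)} has cardinality 1, q, or q²; equivalently, the quadratic form Q_{a,b} over GF(q) has rank s, s−1, or s−2. -/
private lemma pow_pow_fix {F : Type*} [Monoid F] {n : ℕ} {y : F} (h : y ^ n = y) (t : ℕ) :
    y ^ n ^ t = y := by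
  induction t with
  | zero => simp
  | succ t ih => rw [pow_succ, pow_mul, ih, h]

private lemma gcd_pow_fix {F : Type*} [Monoid F] (p : ℕ) :
    ∀ i j : ℕ, ∀ y : F, y ^ p ^ i = y → y ^ p ^ j = y → y ^ p ^ Nat.gcd i j = y := by
  intro i j
  induction i, j using Nat.gcd.induction with
  | H0 j => intro y h0 hj; simpa using hj
  | H1 i j hi ih =>
      intro y hyi hyj
      rw [Nat.gcd_rec]
      refine ih y ?_ hyi
      have hdecomp : i * (j / i) + j % i = j := Nat.div_add_mod j i
      have h1 : y ^ p ^ (i * (j / i)) = y := by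
        rw [pow_mul]; exact pow_pow_fix hyi _
      calc y ^ p ^ (j % i) = (y ^ p ^ (i * (j / i))) ^ p ^ (j % i) := by rw [h1]
        _ = y ^ (p ^ (i * (j / i)) * p ^ (j % i)) := by rw [← pow_mul]
        _ = y ^ p ^ (i * (j / i) + j % i) := by rw [pow_add]
        _ = y := by rw [hdecomp]; exact hyj


/-- The quadratic form `Q_{a,b}(x) = Tr_{p^m/q}(a·x² + b·x^{p^k+1})` from `F = GF(p^m)`
to `K = GF(q)`. -/
noncomputable def Qab {K F : Type*} [Field K] [Field F] [Algebra K F]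
    (p k : ℕ) (a b x : F) : K :=
  Algebra.trace K F (a * x ^ 2 + b * x ^ (p ^ k + 1))

/-- Let `p` be an odd prime, `m, k` positive, `e = gcd(m,k)`, `s = m/e`
odd with `s ≥ 3`, `q = p^e`, `K = GF(q)`, `F = GF(p^m)`.  For `(a,b) ≠ (0,0)`, the
`GF(q)`-subspace `V_{a,b} = {x | Q_{a,b}(x+z) - Q_{a,b}(x) - Q_{a,b}(z) = 0 for all z}`
has cardinality `1`, `q`, or `q²`; i.e. `Q_{a,b}` has rank `s`, `s-1`, or `s-2`. -/
theorem stmt_4 (p m k e s : ℕ) [Fact p.Prime] (hodd : Odd p)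
    (hm : 0 < m) (hk : 0 < k)
    (he : e = Nat.gcd m k) (hs : s = m / e) (hsodd : Odd s) (hs3 : 3 ≤ s)
    (K F : Type*) [Field K] [Fintype K] [Field F] [Fintype F] [Algebra K F]
    (hK : Fintype.card K = p ^ e) (hF : Fintype.card F = p ^ m)
    (a b : F) (hab : (a, b) ≠ (0, 0)) :
    Nat.card {x : F // ∀ z : F,
        Qab (K := K) p k a b (x + z) - Qab (K := K) p k a b x - Qab (K := K) p k a b z = 0}
      = 1 ∨
    Nat.card {x : F // ∀ z : F,
        Qab (K := K) p k a b (x + z) - Qab (K := K) p k a b x - Qab (K := K) p k a b z = 0}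
      = p ^ e ∨
    Nat.card {x : F // ∀ z : F,
        Qab (K := K) p k a b (x + z) - Qab (K := K) p k a b x - Qab (K := K) p k a b z = 0}
      = p ^ (2 * e) := by
  classical
  have hp : p.Prime := Fact.out
  -- `F` has characteristic `p`
  haveI hcharF : CharP F p := by
    haveI := ringChar.charP F
    obtain ⟨n, hr, hcard⟩ := FiniteField.card F (ringChar F)
    have hpm : p ^ m = ringChar F ^ (n : ℕ) := by rw [← hF, hcard]
    have hpdvd : p ∣ ringChar F ^ (n : ℕ) := hpm ▸ dvd_pow_self p hm.ne'
    have : p = ringChar F := (Nat.prime_dvd_prime_iff_eq hp hr).mp (hp.dvd_of_dvd_pow hpdvd)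
    rwa [this]
  haveI : ExpChar F p := ExpChar.prime hp
  have hep : 0 < e := by
    rw [he]; exact Nat.gcd_pos_of_pos_left k hm
  have hq1 : 1 < p ^ e := Nat.one_lt_pow hep.ne' hp.one_lt
  -- the Frobenius `σ : x ↦ x^(p^k)` as a `K`-algebra automorphism of `F`
  have halg : ∀ c : K, (algebraMap K F c) ^ p ^ k = algebraMap K F c := by
    intro c
    have h1 : (algebraMap K F c) ^ p ^ e = algebraMap K F c := by
      rw [← map_pow, ← hK, FiniteField.pow_card]
    obtain ⟨t, ht⟩ : e ∣ k := he ▸ Nat.gcd_dvd_right m k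
    rw [ht, pow_mul]
    exact pow_pow_fix h1 t
  let σhom : F →ₐ[K] F :=
    { iterateFrobenius F p k with
      commutes' := fun c => halg c }
  have hσbij : Function.Bijective σhom :=
    Finite.injective_iff_bijective.mp σhom.toRingHom.injective
  let σ : F ≃ₐ[K] F := AlgEquiv.ofBijective σhom hσbij
  have hσ : ∀ x : F, σ x = x ^ p ^ k := fun x => rfl
  have h2 : (2 : F) ≠ 0 := by
    intro h
    have h2' : ((2 : ℕ) : F) = 0 := by exact_mod_cast h
    have := (CharP.cast_eq_zero_iff F p 2).mp h2'
    have hp2 : p = 2 := (Nat.prime_dvd_prime_iff_eq hp Nat.prime_two).mp this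
    rw [hp2] at hodd
    exact (Nat.not_odd_iff_even.mpr even_two) hodd
  -- the radical condition as a kernel condition
  have hQdiff : ∀ x z : F, Qab (K := K) p k a b (x + z) - Qab (K := K) p k a b x
      - Qab (K := K) p k a b z
      = Algebra.trace K F (z * (2 * a * x + b * x ^ p ^ k + σ.symm (b * x))) := by
    intro x z
    have hfrob : (x + z) ^ p ^ k = x ^ p ^ k + z ^ p ^ k := by
      rw [← hσ, ← hσ, ← hσ, map_add]
    have hexp : a * (x + z) ^ 2 + b * (x + z) ^ (p ^ k + 1)
        - (a * x ^ 2 + b * x ^ (p ^ k + 1)) - (a * z ^ 2 + b * z ^ (p ^ k + 1))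
        = (z * (2 * a * x + b * x ^ p ^ k)) + (b * x) * z ^ p ^ k := by
      have e1 : (x + z) ^ (p ^ k + 1) = (x ^ p ^ k + z ^ p ^ k) * (x + z) := by
        rw [pow_succ, hfrob]
      have e2 : x ^ (p ^ k + 1) = x ^ p ^ k * x := by rw [pow_succ]
      have e3 : z ^ (p ^ k + 1) = z ^ p ^ k * z := by rw [pow_succ]
      rw [e1, e2, e3]; ring
    have htr2 : Algebra.trace K F ((b * x) * z ^ p ^ k)
        = Algebra.trace K F (σ.symm (b * x) * z) := by
      have : σ (σ.symm (b * x) * z) = (b * x) * z ^ p ^ k := by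
        rw [map_mul, AlgEquiv.apply_symm_apply, hσ]
      rw [← this, Algebra.trace_eq_of_algEquiv]
    simp only [Qab]
    rw [← map_sub, ← map_sub, hexp, map_add, htr2, ← map_add]
    ring_nf
  -- nondegeneracy of the trace form
  haveI : Algebra.IsAlgebraic K F := Algebra.IsAlgebraic.of_finite K F
  have hnd : ∀ y : F, (∀ z : F, Algebra.trace K F (z * y) = 0) → y = 0 := by
    intro y hy
    refine (traceForm_nondegenerate K F).1 y (fun z => ?_)
    rw [Algebra.traceForm_apply, mul_comm]
    exact hy z
  -- the `K`-linear operator whose kernel is `V`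
  let σl : F →ₗ[K] F := σ.toLinearMap
  let Plin : F →ₗ[K] F := (LinearMap.mulLeft K (σ b)).comp (σl.comp σl)
    + (LinearMap.mulLeft K (σ (2 * a))).comp σl + LinearMap.mulLeft K b
  have hPlin : ∀ x : F, Plin x = σ b * σ (σ x) + σ (2 * a) * σ x + b * x := by
    intro x; simp [Plin, σl]; ring
  have hker : ∀ x : F, (∀ z : F,
      Qab (K := K) p k a b (x + z) - Qab (K := K) p k a b x - Qab (K := K) p k a b z = 0)
      ↔ Plin x = 0 := by
    intro x
    constructor
    · intro h
      have hL : 2 * a * x + b * x ^ p ^ k + σ.symm (b * x) = 0 := by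
        refine hnd _ (fun z => ?_)
        rw [← hQdiff x z]; exact h z
      have := congrArg σ hL
      simp only [map_add, map_mul, map_zero, map_pow, AlgEquiv.apply_symm_apply] at this
      rw [← hσ (σ x)] at this
      rw [hPlin, map_mul]
      linear_combination this
    · intro h z
      rw [hQdiff x z]
      have hL : 2 * a * x + b * x ^ p ^ k + σ.symm (b * x) = 0 := by
        apply σ.injective
        simp only [map_add, map_mul, map_zero, map_pow, AlgEquiv.apply_symm_apply]
        rw [← hσ (σ x)]
        rw [hPlin, map_mul] at h
        linear_combination h
      rw [hL, mul_zero, map_zero]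
  -- cardinality via the kernel
  set d := Module.finrank K (LinearMap.ker Plin) with hd
  have hequiv : {x : F // ∀ z : F,
      Qab (K := K) p k a b (x + z) - Qab (K := K) p k a b x - Qab (K := K) p k a b z = 0}
      ≃ ↥(LinearMap.ker Plin) :=
    Equiv.subtypeEquivRight (fun x => (hker x).trans (LinearMap.mem_ker).symm)
  have hNcard : Nat.card {x : F // ∀ z : F,
      Qab (K := K) p k a b (x + z) - Qab (K := K) p k a b x - Qab (K := K) p k a b z = 0}
      = (p ^ e) ^ d := by
    haveI : Fintype ↥(LinearMap.ker Plin) := Fintype.ofFinite _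
    rw [Nat.card_congr hequiv, Nat.card_eq_fintype_card, Module.card_eq_pow_finrank (K := K), hK]
  have hcardker : (Finset.univ.filter fun x : F => Plin x = 0).card = (p ^ e) ^ d := by
    haveI : Fintype ↥(LinearMap.ker Plin) := Fintype.ofFinite _
    rw [← Fintype.card_subtype,
      Fintype.card_congr (Equiv.subtypeEquivRight fun x : F =>
        Iff.symm (LinearMap.mem_ker (f := Plin))),
      Module.card_eq_pow_finrank (K := K), hK]
  -- the fixed "subfield" of σ has at most p^e elements
  let Kfix : Finset F := Finset.univ.filter fun y => σ y = y
  have hKfixcard : Kfix.card ≤ p ^ e := by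
    have hfne : (Polynomial.X ^ p ^ e - Polynomial.X : Polynomial F) ≠ 0 := by
      intro h0
      have h1 : (Polynomial.X ^ p ^ e - Polynomial.X : Polynomial F).coeff (p ^ e) = 0 := by
        rw [h0]; simp
      rw [Polynomial.coeff_sub, Polynomial.coeff_X_pow, Polynomial.coeff_X, if_pos rfl,
        if_neg hq1.ne] at h1
      simp at h1
    have hsub : Kfix ⊆ (Polynomial.X ^ p ^ e - Polynomial.X : Polynomial F).roots.toFinset := by
      intro y hy
      have hyk : y ^ p ^ k = y := by rw [← hσ y]; exact (Finset.mem_filter.mp hy).2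
      have hym : y ^ p ^ m = y := by rw [← hF]; exact FiniteField.pow_card y
      have hye : y ^ p ^ e = y := he ▸ gcd_pow_fix p m k y hym hyk
      rw [Multiset.mem_toFinset, Polynomial.mem_roots hfne]
      simp [Polynomial.IsRoot, sub_eq_zero, hye]
    calc Kfix.card ≤ _ := Finset.card_le_card hsub
      _ ≤ Multiset.card (Polynomial.X ^ p ^ e - Polynomial.X : Polynomial F).roots :=
          Multiset.toFinset_card_le _
      _ ≤ (Polynomial.X ^ p ^ e - Polynomial.X : Polynomial F).natDegree :=
          Polynomial.card_roots' _
      _ ≤ p ^ e := by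
          refine le_trans (Polynomial.natDegree_sub_le _ _) ?_
          simp only [Polynomial.natDegree_X_pow, Polynomial.natDegree_X]
          omega
  -- the key bound on the dimension
  have hdle : d ≤ 2 := by
    rcases eq_or_ne b 0 with hb | hb
    · -- b = 0 : the kernel is trivial
      have ha : a ≠ 0 := by
        intro h0; exact hab (by rw [h0, hb])
      have hker0 : LinearMap.ker Plin = ⊥ := by
        rw [LinearMap.ker_eq_bot']
        intro x hx
        rw [hPlin, hb, map_zero, zero_mul, zero_add, zero_mul, add_zero] at hx
        have h2a : σ (2 * a) ≠ 0 := by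
          intro h0
          exact mul_ne_zero h2 ha (σ.injective (by rw [h0, map_zero]))
        have hσx : σ x = 0 := by
          rcases mul_eq_zero.mp hx with h | h
          · exact absurd h h2a
          · exact h
        exact σ.injective (by rw [hσx, map_zero])
      rw [hd, hker0, finrank_bot]; omega
    · -- b ≠ 0
      by_cases hker0 : LinearMap.ker Plin = ⊥
      · rw [hd, hker0, finrank_bot]; omega
      obtain ⟨w, hwker, hw0⟩ := Submodule.ne_bot_iff _ |>.mp hker0
      have hwP : Plin w = 0 := LinearMap.mem_ker.mp hwker
      set d2 := σ b * σ (σ w) with hd2def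
      set d1 := σ (2 * a) * σ w with hd1def
      have hσne : ∀ u : F, u ≠ 0 → σ u ≠ 0 := by
        intro u hu h0
        exact hu (σ.injective (by rw [h0, map_zero]))
      have hd2ne : d2 ≠ 0 := mul_ne_zero (hσne b hb) (hσne _ (hσne w hw0))
      have hsum : d2 + d1 + b * w = 0 := by
        rw [hPlin] at hwP; rw [hd2def, hd1def]; linear_combination hwP
      have hPwy : ∀ y : F, Plin (w * y)
          = d2 * σ (σ y - y) + (d2 + d1) * (σ y - y) + (d2 + d1 + b * w) * y := by
        intro y
        rw [hPlin]
        simp only [map_mul, map_sub, hd2def, hd1def]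
        ring
      have hPwy0 : ∀ y : F, Plin (w * y) = 0
          ↔ d2 * σ (σ y - y) + (d2 + d1) * (σ y - y) = 0 := by
        intro y; rw [hPwy, hsum, zero_mul, add_zero]
      -- the kernel of the degree-one piece
      let Zq : Finset F := Finset.univ.filter fun z => d2 * σ z + (d2 + d1) * z = 0
      have hZq : Zq.card ≤ p ^ e := by
        by_cases hZ0 : ∀ z ∈ Zq, z = (0 : F)
        · have hsub : Zq ⊆ {0} := fun z hz => Finset.mem_singleton.mpr (hZ0 z hz)
          calc Zq.card ≤ _ := Finset.card_le_card hsub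
            _ ≤ p ^ e := by simpa using hq1.le
        · push_neg at hZ0
          obtain ⟨z0, hz0mem, hz0ne⟩ := hZ0
          have hz0rel : d2 * σ z0 + (d2 + d1) * z0 = 0 := (Finset.mem_filter.mp hz0mem).2
          refine le_trans (Finset.card_le_card_of_injOn (fun z => z * z0⁻¹) ?_ ?_) hKfixcard
          · intro z hz
            have hzrel : d2 * σ z + (d2 + d1) * z = 0 := (Finset.mem_filter.mp hz).2
            have hcross : σ z * z0 = σ z0 * z := by
              apply mul_left_cancel₀ hd2ne
              linear_combination z0 * hzrel - z * hz0rel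
            have hz0σ : σ z0 ≠ 0 := hσne z0 hz0ne
            simp only [Kfix, Finset.coe_filter, Set.mem_setOf_eq, Finset.mem_filter, Finset.mem_univ, true_and]
            rw [map_mul, map_inv₀]
            field_simp
            linear_combination hcross
          · intro z1 _ z2 _ h12
            exact mul_right_cancel₀ (inv_ne_zero hz0ne) h12
      -- counting the kernel of `Plin` composed with multiplication by `w`
      let Sm : Finset F := Finset.univ.filter fun y => Plin (w * y) = 0
      have hmapsto : ∀ y ∈ Sm, (σ y - y) ∈ Zq := by
        intro y hy
        have hy' : Plin (w * y) = 0 := (Finset.mem_filter.mp hy).2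
        simp only [Zq, Finset.mem_filter, Finset.mem_univ, true_and]
        exact (hPwy0 y).mp hy'
      have hfib : ∀ bv ∈ Zq, (Sm.filter fun y => σ y - y = bv).card ≤ p ^ e := by
        intro bv _
        by_cases hne : (Sm.filter fun y => σ y - y = bv).Nonempty
        · obtain ⟨y0, hy0⟩ := hne
          refine le_trans (Finset.card_le_card_of_injOn (fun y => y - y0) ?_ ?_) hKfixcard
          · intro y hy
            simp only [Kfix, Finset.coe_filter, Set.mem_setOf_eq, Finset.mem_filter, Finset.mem_univ, true_and]
            have h1 : σ y - y = bv := (Finset.mem_filter.mp hy).2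
            have h2' : σ y0 - y0 = bv := (Finset.mem_filter.mp hy0).2
            rw [map_sub]
            linear_combination h1 - h2'
          · intro y1 _ y2 _ h12
            have := congrArg (fun t => t + y0) h12
            simpa using this
        · rw [Finset.not_nonempty_iff_eq_empty.mp hne]
          simp
      have hSm : Sm.card ≤ p ^ e * p ^ e := by
        calc Sm.card ≤ p ^ e * Zq.card :=
              Finset.card_le_mul_card_image_of_maps_to hmapsto (p ^ e) hfib
          _ ≤ p ^ e * p ^ e := Nat.mul_le_mul_left _ hZq
      have hScard : (Finset.univ.filter fun x : F => Plin x = 0).card = Sm.card := by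
        apply Finset.card_bij' (fun x _ => w⁻¹ * x) (fun y _ => w * y)
        · intro x hx
          simp only [Sm, Finset.mem_filter, Finset.mem_univ, true_and] at hx ⊢
          rwa [← mul_assoc, mul_inv_cancel₀ hw0, one_mul]
        · intro y hy
          simp only [Sm, Finset.mem_filter, Finset.mem_univ, true_and] at hy ⊢
          exact hy
        · intro x _
          rw [← mul_assoc, mul_inv_cancel₀ hw0, one_mul]
        · intro y _
          rw [← mul_assoc, inv_mul_cancel₀ hw0, one_mul]
      have hbound : (p ^ e) ^ d ≤ (p ^ e) ^ 2 := by
        rw [← hcardker, hScard, pow_two]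
        exact hSm
      exact (Nat.pow_le_pow_iff_right hq1).mp hbound
  -- conclude
  interval_cases d
  · left; rw [hNcard, pow_zero]
  · right; left; rw [hNcard, pow_one]
  · right; right; rw [hNcard, ← pow_mul']
end

section
/- Suppose k is even and e is odd. Then for any (a,b) ∈ GF(p^m)² with (a,b) ≠ (0,0), at least one of the quadratic forms Q_{a,b} and Q_{−a,b} has rank s; that is, at least one of the sets V_{a,b} = {x : Q_{a,b}(x+z) − Q_{a,b}(x) − Q_{a,b}(z) = 0 for all z} and V_{−a,b} = {x : Q_{−a,b}(x+z) − Q_{−a,b}(x) − Q_{−a,b}(z) = 0 for all z} equals {0}. -/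
/-- Let `p` be an odd prime, `m, k` positive, `e = gcd(m,k)`, `s = m/e`
odd with `s ≥ 3`, `q = p^e`, `K = GF(q)`, `F = GF(p^m)`.  Suppose `k` is even and `e` is
odd.  Then for any `(a,b) ≠ (0,0)`, at least one of the quadratic forms `Q_{a,b}` and
`Q_{-a,b}` has rank `s`; that is, at least one of the radicals
`V_{a,b} = {x | Q_{a,b}(x+z) - Q_{a,b}(x) - Q_{a,b}(z) = 0 for all z}` and `V_{-a,b}`
equals `{0}`. -/
theorem stmt_5 (p m k e s : ℕ) [Fact p.Prime] (hodd : Odd p)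
    (hm : 0 < m) (hk : 0 < k)
    (he : e = Nat.gcd m k) (hs : s = m / e) (hsodd : Odd s) (hs3 : 3 ≤ s)
    (hkeven : Even k) (heodd : Odd e)
    (K F : Type*) [Field K] [Fintype K] [Field F] [Fintype F] [Algebra K F]
    (hK : Fintype.card K = p ^ e) (hF : Fintype.card F = p ^ m)
    (a b : F) (hab : (a, b) ≠ (0, 0)) :
    {x : F | ∀ z : F,
        Qab (K := K) p k a b (x + z) - Qab (K := K) p k a b x - Qab (K := K) p k a b z = 0}
      = {0} ∨
    {x : F | ∀ z : F,
        Qab (K := K) p k (-a) b (x + z) - Qab (K := K) p k (-a) b x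
          - Qab (K := K) p k (-a) b z = 0}
      = {0} := by
  classical
  have hp : p.Prime := Fact.out
  have hp2 : p ≠ 2 := by rintro rfl; exact (Nat.not_odd_iff_even.mpr even_two) hodd
  -- basic arithmetic
  have hem : e ∣ m := he ▸ Nat.gcd_dvd_left m k
  have hepos : 0 < e := he ▸ Nat.gcd_pos_of_pos_left k hm
  have hek : e ∣ k := he ▸ Nat.gcd_dvd_right m k
  have hes : e * s = m := by rw [hs]; exact Nat.mul_div_cancel' hem
  have hspos : 0 < s := by omega
  have hpk0 : p ^ k ≠ 0 := (pow_pos hp.pos k).ne'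
  -- characteristic of K and F
  have charK : CharP K p := by
    have h0 : ((p : K)) ^ e = 0 := by
      rw [← Nat.cast_pow, ← hK]
      exact FiniteField.cast_card_eq_zero K
    have hpK : (p : K) = 0 := pow_eq_zero_iff (by omega : e ≠ 0) |>.mp h0
    exact ringChar.of_eq (CharP.ringChar_of_prime_eq_zero hp hpK)
  have charF : CharP F p := by
    have h0 : ((p : F)) ^ m = 0 := by
      rw [← Nat.cast_pow, ← hF]
      exact FiniteField.cast_card_eq_zero F
    have hpF : (p : F) = 0 := pow_eq_zero_iff (by omega : m ≠ 0) |>.mp h0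
    exact ringChar.of_eq (CharP.ringChar_of_prime_eq_zero hp hpF)
  haveI := charK
  haveI := charF
  haveI : ExpChar F p := ExpChar.prime hp
  haveI : Module.Finite K F := Module.finite_iff_finite.mpr inferInstance
  haveI : FiniteDimensional K F := inferInstance
  -- the finrank is s
  have hrank : Module.finrank K F = s := by
    have h := Module.card_eq_pow_finrank (K := K) (V := F)
    rw [hF, hK, ← pow_mul] at h
    have := Nat.pow_right_injective hp.two_le h
    have : e * Module.finrank K F = e * s := by rw [hes, ← this]
    exact Nat.eq_of_mul_eq_mul_left (by omega) this
  -- elements of K are fixed by x ^ p ^ k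
  have hKfix : ∀ c : K, c ^ p ^ k = c := by
    intro c
    obtain ⟨j, hj⟩ := hek
    rw [hj, pow_mul, ← hK]
    exact FiniteField.pow_card_pow j c
  -- (p^(k*s))-th power is the identity on F
  have pow_ks : ∀ w : F, w ^ p ^ (k * s) = w := by
    intro w
    obtain ⟨j, hj⟩ := hek
    have : k * s = m * j := by rw [hj, ← hes]; ring
    rw [this, pow_mul, ← hF]
    exact FiniteField.pow_card_pow j w
  -- the Frobenius x ↦ x ^ p ^ k as a K-algebra equivalence
  let φA : F →ₐ[K] F :=
    { toRingHom := iterateFrobenius F p k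
      commutes' := by
        intro c
        show (algebraMap K F c) ^ p ^ k = algebraMap K F c
        rw [← map_pow, hKfix] }
  have hφinj : Function.Injective φA := φA.toRingHom.injective
  let φ : F ≃ₐ[K] F := AlgEquiv.ofBijective φA ((Finite.injective_iff_bijective).mp hφinj)
  have hφ : ∀ w : F, φ w = w ^ p ^ k := fun w => rfl
  -- trace is invariant under Frobenius
  have traceφ : ∀ w : F, Algebra.trace K F (w ^ p ^ k) = Algebra.trace K F w := by
    intro w
    have := Algebra.trace_eq_of_algEquiv φ w
    rwa [hφ] at this
  -- norm is invariant under Frobenius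
  have normφ : ∀ w : F, Algebra.norm K (w ^ p ^ k : F) = Algebra.norm K w := by
    intro w
    rw [map_pow]
    exact hKfix (Algebra.norm K w)
  -- norm of -1
  have hNneg : Algebra.norm K (-1 : F) = -1 := by
    have h1 : algebraMap K F (-1) = (-1 : F) := by rw [map_neg, map_one]
    rw [← h1, Algebra.norm_algebraMap, hrank, hsodd.neg_one_pow]
  have hN0 : ∀ w : F, w ≠ 0 → Algebra.norm K w ≠ 0 := by
    intro w hw
    exact Algebra.norm_ne_zero_iff.mpr hw
  have h2K : (2 : K) ≠ 0 := by
    intro h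
    have hdvd : p ∣ 2 := (CharP.cast_eq_zero_iff K p 2).mp (by exact_mod_cast h)
    exact hp2 ((Nat.prime_dvd_prime_iff_eq hp Nat.prime_two).mp hdvd)
  -- every radical element satisfies the linearized equation
  have radical : ∀ a' x : F,
      (∀ z : F, Qab (K := K) p k a' b (x + z) - Qab (K := K) p k a' b x
        - Qab (K := K) p k a' b z = 0) →
      b ^ p ^ k * (x ^ p ^ k) ^ p ^ k + 2 * a' ^ p ^ k * x ^ p ^ k + b * x = 0 := by
    intro a' x hx
    set w : F := (b * x) ^ p ^ (k * (s - 1)) with hw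
    have hkexp : k * (s - 1) + k = k * s := by
      have h1 : s - 1 + 1 = s := Nat.succ_pred_eq_of_pos hspos
      calc k * (s - 1) + k = k * ((s - 1) + 1) := by ring
        _ = k * s := by rw [h1]
    have hφw : w ^ p ^ k = b * x := by
      rw [hw, ← pow_mul, ← pow_add, hkexp]
      exact pow_ks (b * x)
    have hlin : ∀ z : F, Algebra.trace K F ((2 * a' * x + b * x ^ p ^ k + w) * z) = 0 := by
      intro z
      have h := hx z
      simp only [Qab] at h
      rw [← map_sub, ← map_sub] at h
      have expand : a' * (x + z) ^ 2 + b * (x + z) ^ (p ^ k + 1)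
          - (a' * x ^ 2 + b * x ^ (p ^ k + 1)) - (a' * z ^ 2 + b * z ^ (p ^ k + 1))
          = (2 * a' * x + b * x ^ p ^ k) * z + (b * x) * z ^ p ^ k := by
        have e1 : (x + z) ^ (p ^ k + 1) = ((x + z) ^ p ^ k) * (x + z) := by
          rw [pow_succ]
        have e2 : (x + z) ^ p ^ k = x ^ p ^ k + z ^ p ^ k := add_pow_char_pow x z p k
        have e3 : x ^ (p ^ k + 1) = x ^ p ^ k * x := by rw [pow_succ]
        have e4 : z ^ (p ^ k + 1) = z ^ p ^ k * z := by rw [pow_succ]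
        rw [e1, e2, e3, e4]; ring
      rw [expand, map_add] at h
      have h2 : Algebra.trace K F ((b * x) * z ^ p ^ k) = Algebra.trace K F (w * z) := by
        conv_lhs => rw [← hφw, ← mul_pow]
        exact traceφ (w * z)
      rw [h2, ← map_add] at h
      convert h using 2
      ring
    have hc : 2 * a' * x + b * x ^ p ^ k + w = 0 := by
      apply (traceForm_nondegenerate K F).1
      intro z
      rw [Algebra.traceForm_apply]
      exact hlin z
    have h2p : (2 : F) ^ p ^ k = 2 := by
      have h := map_ofNat (iterateFrobenius F p k) 2
      rwa [iterateFrobenius_def] at h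
    have h0 : (2 * a' * x + b * x ^ p ^ k + w) ^ p ^ k = 0 := by
      rw [hc]
      exact zero_pow hpk0
    rw [add_pow_char_pow, add_pow_char_pow, mul_pow, mul_pow, mul_pow, hφw, h2p] at h0
    linear_combination h0
  -- 0 is always in the radical
  have zero_mem : ∀ a' : F, ∀ z : F, Qab (K := K) p k a' b (0 + z)
      - Qab (K := K) p k a' b 0 - Qab (K := K) p k a' b z = 0 := by
    intro a' z
    have h0 : Qab (K := K) p k a' b 0 = 0 := by
      simp [Qab, zero_pow, pow_succ]
    rw [zero_add, h0]
    ring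
  -- case b = 0
  by_cases hb : b = 0
  · have ha : a ≠ 0 := by
      intro h
      exact hab (by rw [h, hb])
    left
    apply Set.eq_singleton_iff_unique_mem.mpr
    refine ⟨zero_mem a, ?_⟩
    intro x hx
    have hE := radical a x hx
    rw [hb] at hE
    rw [zero_pow hpk0, zero_mul, zero_mul] at hE
    have h2F : (2 : F) ≠ 0 := by
      intro h
      have hdvd : p ∣ 2 := (CharP.cast_eq_zero_iff F p 2).mp (by exact_mod_cast h)
      exact hp2 ((Nat.prime_dvd_prime_iff_eq hp Nat.prime_two).mp hdvd)
    have hxp : x ^ p ^ k = 0 := by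
      have ha' : a ^ p ^ k ≠ 0 := pow_ne_zero _ ha
      have : 2 * a ^ p ^ k * x ^ p ^ k = 0 := by linear_combination hE
      rcases mul_eq_zero.mp this with h | h
      · rcases mul_eq_zero.mp h with h | h
        · exact absurd h h2F
        · exact absurd h ha'
      · exact h
    exact pow_eq_zero_iff hpk0 |>.mp hxp
  -- case b ≠ 0
  · by_contra hcon
    push_neg at hcon
    obtain ⟨h1, h2⟩ := hcon
    have ex1 : ∃ x : F, (∀ z : F, Qab (K := K) p k a b (x + z) - Qab (K := K) p k a b x
        - Qab (K := K) p k a b z = 0) ∧ x ≠ 0 := by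
      by_contra hno
      push_neg at hno
      exact h1 (Set.eq_singleton_iff_unique_mem.mpr ⟨zero_mem a, fun x hx => hno x hx⟩)
    have ex2 : ∃ y : F, (∀ z : F, Qab (K := K) p k (-a) b (y + z) - Qab (K := K) p k (-a) b y
        - Qab (K := K) p k (-a) b z = 0) ∧ y ≠ 0 := by
      by_contra hno
      push_neg at hno
      exact h2 (Set.eq_singleton_iff_unique_mem.mpr ⟨zero_mem (-a), fun y hy => hno y hy⟩)
    obtain ⟨x, hx, hx0⟩ := ex1
    obtain ⟨y, hy, hy0⟩ := ex2
    have hEx := radical a x hx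
    have hEy := radical (-a) y hy
    have hpk_odd : Odd (p ^ k) := hodd.pow
    rw [hpk_odd.neg_pow] at hEy
    -- hEy : b^{pk} (y^{pk})^{pk} + 2 (-(a^{pk})) y^{pk} + b y = 0
    set N : F →* K := Algebra.norm K with hNdef
    set D : F := x ^ p ^ k * y + x * y ^ p ^ k with hD
    by_cases hD0 : D = 0
    · -- x^{pk} y = -(x y^{pk}); take norms
      have heq : x ^ p ^ k * y = -(x * y ^ p ^ k) := by
        rw [hD] at hD0
        linear_combination hD0
      have hn : N (x ^ p ^ k * y) = N (-(x * y ^ p ^ k)) := by rw [heq]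
      rw [map_mul, normφ] at hn
      have : N (-(x * y ^ p ^ k)) = -(N x * N y) := by
        have : (-(x * y ^ p ^ k)) = (-1 : F) * (x * y ^ p ^ k) := by ring
        rw [this, map_mul, hNneg, map_mul, normφ]
        ring
      rw [this] at hn
      have hxy : N x * N y ≠ 0 := mul_ne_zero (hN0 x hx0) (hN0 y hy0)
      have : (2 : K) * (N x * N y) = 0 := by linear_combination hn
      rcases mul_eq_zero.mp this with h | h
      · exact h2K h
      · exact hxy h
    · -- the key identity b^{pk} D^{pk} = -(b D); take norms
      have hDpow : D ^ p ^ k = (x ^ p ^ k) ^ p ^ k * y ^ p ^ k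
          + x ^ p ^ k * (y ^ p ^ k) ^ p ^ k := by
        rw [hD, add_pow_char_pow, mul_pow, mul_pow]
      have key : b ^ p ^ k * D ^ p ^ k = -(b * D) := by
        rw [hDpow, hD]
        linear_combination y ^ p ^ k * hEx + x ^ p ^ k * hEy
      have hn : N (b ^ p ^ k * D ^ p ^ k) = N (-(b * D)) := by rw [key]
      rw [map_mul, normφ, normφ] at hn
      have : N (-(b * D)) = -(N b * N D) := by
        have : (-(b * D)) = (-1 : F) * (b * D) := by ring
        rw [this, map_mul, hNneg, map_mul]
        ring
      rw [this] at hn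
      have hbD : N b * N D ≠ 0 := mul_ne_zero (hN0 b hb) (hN0 D hD0)
      have : (2 : K) * (N b * N D) = 0 := by linear_combination hn
      rcases mul_eq_zero.mp this with h | h
      · exact h2K h
      · exact hbD h
end

section
/- Suppose k/e is even and s is odd. Then x^{p^k−1} ≠ −1 for every x ∈ GF(p^m)^*. -/
/-- Let `p` be an odd prime, `m, k` positive integers, `e = gcd(m,k)`,
`s = m/e`.  Suppose `k/e` is even and `s` is odd.  Then `x^(p^k - 1) ≠ -1` for every
nonzero `x ∈ GF(p^m)`. -/
theorem stmt_6 (p m k : ℕ) [Fact p.Prime] (hodd : Odd p)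
    (hm : 0 < m) (hk : 0 < k)
    (hke : Even (k / Nat.gcd m k)) (hso : Odd (m / Nat.gcd m k))
    (F : Type*) [Field F] [Fintype F] (hF : Fintype.card F = p ^ m) :
    ∀ x : F, x ≠ 0 → x ^ (p ^ k - 1) ≠ -1 := by
  intro x hx hcontra
  set e := Nat.gcd m k with he
  set s := m / e with hs
  have hp1 : 1 < p := (Fact.out : p.Prime).one_lt
  have he0 : 0 < e := Nat.gcd_pos_of_pos_left _ hm
  have hem : e ∣ m := Nat.gcd_dvd_left m k
  have hek : e ∣ k := Nat.gcd_dvd_right m k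
  have hms : m = e * s := (Nat.mul_div_cancel' hem).symm
  set N : ℕ := ∑ i ∈ Finset.range s, (p ^ e) ^ i with hN
  -- (p^e - 1) * N = p^m - 1
  have key : (p ^ e - 1) * N = p ^ m - 1 := by
    have h1 : (1:ℕ) ≤ p ^ e := Nat.one_le_pow _ _ (by omega)
    have h2 : (1:ℕ) ≤ p ^ m := Nat.one_le_pow _ _ (by omega)
    have hpm : ((p:ℤ)) ^ m = ((p:ℤ) ^ e) ^ s := by rw [← pow_mul, ← hms]
    rw [hN]
    zify [h1, h2]
    push_cast
    rw [hpm]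
    linear_combination geom_sum_mul ((p:ℤ) ^ e) s
  -- N is odd
  have hNodd : Odd N := by
    rw [hN, Nat.odd_iff, Finset.sum_nat_mod]
    have h1 : ∀ i ∈ Finset.range s, (p ^ e) ^ i % 2 = 1 :=
      fun i _ => Nat.odd_iff.mp ((hodd.pow).pow)
    rw [Finset.sum_congr rfl h1]
    simpa using Nat.odd_iff.mp hso
  -- p^e - 1 ∣ p^k - 1
  have hdvd : p ^ e - 1 ∣ p ^ k - 1 := by
    obtain ⟨c, hc⟩ := hek
    calc p ^ e - 1 = p ^ e - 1 ^ c := by rw [one_pow]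
    _ ∣ (p ^ e) ^ c - 1 ^ c := by
        simpa using Nat.sub_dvd_pow_sub_pow (p ^ e) 1 c
    _ = p ^ k - 1 := by rw [one_pow, ← pow_mul, ← hc]
  -- hence p^m - 1 ∣ (p^k - 1) * N
  obtain ⟨c, hc⟩ := hdvd
  have hmul : (p ^ k - 1) * N = (p ^ m - 1) * c := by
    rw [hc]; ring_nf; rw [← key]; ring
  have hx1 : x ^ (p ^ m - 1) = 1 := by
    rw [← hF]; exact FiniteField.pow_card_sub_one_eq_one x hx
  have h1 : (1 : F) = -1 := by
    calc (1 : F) = (x ^ (p ^ m - 1)) ^ c := by rw [hx1, one_pow]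
    _ = x ^ ((p ^ k - 1) * N) := by rw [← pow_mul, hmul]
    _ = (-1) ^ N := by rw [pow_mul, hcontra]
    _ = -1 := hNodd.neg_one_pow
  -- contradiction: char F = p is odd
  have hchar : ringChar F ≠ 2 := by
    intro h2
    obtain ⟨n, hn, hcard⟩ := FiniteField.card F (ringChar F)
    rw [h2, hF] at hcard
    have : p ∣ 2 ^ (n : ℕ) := hcard ▸ dvd_pow_self p hm.ne'
    have h2 := Nat.le_of_dvd (by norm_num) (Nat.Prime.dvd_of_dvd_pow (Fact.out) this)
    have := Nat.odd_iff.mp hodd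
    omega
  exact Ring.neg_one_ne_one_of_char_ne_two hchar h1.symm
end

section
/- Suppose k is even and e is odd. Then the set S₁ = {(y₁,y₂,x₁,x₂) ∈ GF(p)^* × GF(p)^* × GF(p^m) × GF(p^m) : y₁x₁² − y₂x₂² = 0 and y₁x₁^{p^k+1} − y₂x₂^{p^k+1} = 0} has cardinality (p−1)²·p^m. -/
open Finset

lemma aux_gcd_pow_sub_one_dvd (p k m : ℕ) (hp : 2 ≤ p) (hk : 0 < k) :
    Nat.gcd (p ^ k - 1) (p ^ m - 1) ∣ p ^ (Nat.gcd k m) - 1 := by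
  set d := Nat.gcd (p ^ k - 1) (p ^ m - 1) with hd
  have hppos : ∀ n : ℕ, 1 ≤ p ^ n := fun n => Nat.one_le_pow _ _ (by omega)
  have hdpos : 0 < d := Nat.gcd_pos_of_pos_left _ (by have := Nat.one_lt_pow hk.ne' hp; omega)
  have : NeZero d := ⟨hdpos.ne'⟩
  have key : ∀ n : ℕ, d ∣ p ^ n - 1 → ((p : ZMod d)) ^ n = 1 := by
    intro n hn
    have h1 : ((p ^ n : ℕ) : ZMod d) = ((p ^ n - 1 : ℕ) : ZMod d) + 1 := by
      have : p ^ n = (p ^ n - 1) + 1 := (Nat.sub_add_cancel (hppos n)).symm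
      rw [this]; push_cast; ring
    have h2 : ((p ^ n - 1 : ℕ) : ZMod d) = 0 := (ZMod.natCast_eq_zero_iff _ _).2 hn
    push_cast at h1
    rw [h1, h2, zero_add]
  have h3 : ((p : ZMod d)) ^ Nat.gcd k m = 1 :=
    pow_gcd_eq_one.2 ⟨key k (Nat.gcd_dvd_left _ _), key m (Nat.gcd_dvd_right _ _)⟩
  have h4 : ((p ^ Nat.gcd k m - 1 : ℕ) : ZMod d) = 0 := by
    push_cast [Nat.cast_sub (hppos _)]
    rw [h3]; ring
  exact (ZMod.natCast_eq_zero_iff _ _).1 h4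

lemma aux_gcd_two_mul (p e : ℕ) (hp2 : 2 ≤ p) (hpodd : Odd p) (he : Odd e) :
    Nat.gcd (2 * (p - 1)) (p ^ e - 1) = p - 1 := by
  have hgeom : p ^ e - 1 = (p - 1) * (∑ i ∈ Finset.range e, p ^ i) := by
    rw [mul_comm]
    exact (geom_sum_mul_of_one_le (by omega) e).symm
  have ht : Odd (∑ i ∈ Finset.range e, p ^ i) := by
    rw [Nat.odd_iff, Finset.sum_nat_mod]
    have : ∀ i ∈ Finset.range e, p ^ i % 2 = 1 := by
      intro i _
      rw [Nat.pow_mod, Nat.odd_iff.1 hpodd, one_pow]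
      rfl
    rw [Finset.sum_congr rfl this, Finset.sum_const, Finset.card_range, smul_eq_mul, mul_one]
    exact Nat.odd_iff.1 he
  rw [hgeom, mul_comm 2 (p-1), Nat.gcd_mul_left]
  rw [Nat.Coprime.gcd_eq_one (Nat.coprime_two_left.2 ht), mul_one]

lemma aux_mem_range_iff (p : ℕ) [Fact p.Prime] (F : Type*) [Field F] [Fintype F]
    [Algebra (ZMod p) F] (z : F) :
    (∃ c : ZMod p, algebraMap (ZMod p) F c = z) ↔ z ^ p = z := by
  classical
  constructor
  · rintro ⟨c, rfl⟩
    rw [← map_pow, ZMod.pow_card]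
  · intro hz
    have hp2 : 2 ≤ p := (Fact.out : p.Prime).two_le
    have hinj : Function.Injective (algebraMap (ZMod p) F) := (algebraMap (ZMod p) F).injective
    set A : Finset F := Finset.univ.image (algebraMap (ZMod p) F) with hA
    have hcardA : A.card = p := by
      rw [hA, Finset.card_image_of_injective _ hinj, Finset.card_univ, ZMod.card]
    set B : Finset F := Finset.univ.filter (fun w : F => w ^ p = w) with hB
    have hAB : A ⊆ B := by
      intro w hw
      simp only [hA, Finset.mem_image] at hw
      obtain ⟨c, _, rfl⟩ := hw
      simp only [hB, Finset.mem_filter, Finset.mem_univ, true_and]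
      rw [← map_pow, ZMod.pow_card]
    have hq : (Polynomial.X ^ p - Polynomial.X : Polynomial F) ≠ 0 := by
      intro h
      have := congrArg (Polynomial.coeff · p) h
      simp only [Polynomial.coeff_sub, Polynomial.coeff_X_pow, Polynomial.coeff_X,
        if_pos rfl] at this
      rw [if_neg (by omega : ¬ (1 = p))] at this
      simp at this
    have hBcard : B.card ≤ p := by
      have hsub : B ⊆ (Polynomial.X ^ p - Polynomial.X : Polynomial F).roots.toFinset := by
        intro w hw
        simp only [hB, Finset.mem_filter, Finset.mem_univ, true_and] at hw
        rw [Multiset.mem_toFinset, Polynomial.mem_roots hq]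
        simp [Polynomial.IsRoot, sub_eq_zero, hw]
      calc B.card ≤ _ := Finset.card_le_card hsub
        _ ≤ Multiset.card (Polynomial.X ^ p - Polynomial.X : Polynomial F).roots :=
            Multiset.toFinset_card_le _
        _ ≤ (Polynomial.X ^ p - Polynomial.X : Polynomial F).natDegree := Polynomial.card_roots' _
        _ ≤ p := by
            refine le_trans (Polynomial.natDegree_sub_le _ _) ?_
            simp only [Polynomial.natDegree_X_pow, Polynomial.natDegree_X]
            omega
    have : A = B := Finset.eq_of_subset_of_card_le hAB (by omega)
    have hzB : z ∈ B := by simp [hB, hz]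
    rw [← this, hA, Finset.mem_image] at hzB
    obtain ⟨c, _, hc⟩ := hzB
    exact ⟨c, hc⟩

/-- Let `p` be an odd prime, `m, k` positive, `e = gcd(m,k)`, `s = m/e`
odd with `s ≥ 3`.  Suppose `k` is even and `e` is odd.  Then the set
`S₁ = {(y₁,y₂,x₁,x₂) ∈ GF(p)^* × GF(p)^* × GF(p^m) × GF(p^m) :
  y₁x₁² - y₂x₂² = 0 and y₁x₁^{p^k+1} - y₂x₂^{p^k+1} = 0}`
has cardinality `(p-1)²·p^m`.  (`GF(p)` is viewed inside `F = GF(p^m)` via the algebra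
map from `ZMod p`.) -/
theorem stmt_11 (p m k e s : ℕ) [Fact p.Prime] (hodd : Odd p)
    (hm : 0 < m) (hk : 0 < k)
    (he : e = Nat.gcd m k) (hs : s = m / e) (hsodd : Odd s) (hs3 : 3 ≤ s)
    (hkeven : Even k) (heodd : Odd e)
    (F : Type*) [Field F] [Fintype F] [Algebra (ZMod p) F]
    (hF : Fintype.card F = p ^ m) :
    Nat.card {v : ZMod p × ZMod p × F × F //
        v.1 ≠ 0 ∧ v.2.1 ≠ 0 ∧
        algebraMap (ZMod p) F v.1 * v.2.2.1 ^ 2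
          - algebraMap (ZMod p) F v.2.1 * v.2.2.2 ^ 2 = 0 ∧
        algebraMap (ZMod p) F v.1 * v.2.2.1 ^ (p ^ k + 1)
          - algebraMap (ZMod p) F v.2.1 * v.2.2.2 ^ (p ^ k + 1) = 0}
      = (p - 1) ^ 2 * p ^ m := by
  classical
  have hp2 : 2 ≤ p := (Fact.out : p.Prime).two_le
  set φ : ZMod p →+* F := algebraMap (ZMod p) F with hφdef
  have hinj : Function.Injective φ := φ.injective
  have hφ0 : ∀ c : ZMod p, φ c = 0 ↔ c = 0 := fun c =>
    ⟨fun h => hinj (by simpa using h), fun h => by simp [h]⟩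
  have hpk1 : 1 ≤ p ^ k := Nat.one_le_pow _ _ (by omega)
  have hpm1 : 1 ≤ p ^ m := Nat.one_le_pow _ _ (by omega)
  -- the predicate
  set P : ZMod p × ZMod p × F × F → Prop := fun v =>
    v.1 ≠ 0 ∧ v.2.1 ≠ 0 ∧
      φ v.1 * v.2.2.1 ^ 2 - φ v.2.1 * v.2.2.2 ^ 2 = 0 ∧
      φ v.1 * v.2.2.1 ^ (p ^ k + 1) - φ v.2.1 * v.2.2.2 ^ (p ^ k + 1) = 0 with hP
  rw [Nat.card_eq_fintype_card, Fintype.card_subtype]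
  have hsplit := Finset.card_filter_add_card_filter_not
    (s := Finset.univ.filter P) (p := fun v : ZMod p × ZMod p × F × F => v.2.2.2 = 0)
  rw [Finset.filter_filter, Finset.filter_filter] at hsplit
  -- card of ZMod p nonzero
  have hcZ : (Finset.univ.filter (fun y : ZMod p => y ≠ 0)).card = p - 1 := by
    rw [Finset.filter_ne', Finset.card_erase_of_mem (Finset.mem_univ _),
      Finset.card_univ, ZMod.card]
  have hcF : (Finset.univ.filter (fun x : F => x ≠ 0)).card = p ^ m - 1 := by
    rw [Finset.filter_ne', Finset.card_erase_of_mem (Finset.mem_univ _),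
      Finset.card_univ, hF]
  -- the zero part
  have h0 : (Finset.univ.filter (fun v => P v ∧ v.2.2.2 = 0)).card = (p - 1) ^ 2 := by
    have heq : (Finset.univ.filter (fun v => P v ∧ v.2.2.2 = 0)) =
        ((Finset.univ.filter (fun y : ZMod p => y ≠ 0)) ×ˢ
          (Finset.univ.filter (fun y : ZMod p => y ≠ 0))).image
            (fun y : ZMod p × ZMod p => (y.1, y.2, (0:F), (0:F))) := by
      ext ⟨y₁, y₂, x₁, x₂⟩
      simp only [Finset.mem_filter, Finset.mem_univ, true_and, Finset.mem_image,
        Finset.mem_product, hP, Prod.mk.injEq]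
      constructor
      · rintro ⟨⟨hy₁, hy₂, heq1, _⟩, rfl⟩
        refine ⟨(y₁, y₂), ⟨hy₁, hy₂⟩, rfl, rfl, ?_, rfl⟩
        have : φ y₁ * x₁ ^ 2 = 0 := by
          have := heq1
          simpa using this
        rcases mul_eq_zero.1 this with h | h
        · exact absurd ((hφ0 y₁).1 h) hy₁
        · exact ((pow_eq_zero_iff (by norm_num : (2:ℕ) ≠ 0)).1 h).symm
      · rintro ⟨⟨a, b⟩, ⟨ha, hb⟩, rfl, rfl, rfl, rfl⟩
        exact ⟨⟨ha, hb, by ring, by ring⟩, rfl⟩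
    rw [heq, Finset.card_image_of_injective _ (fun a b hab => by
      simpa [Prod.ext_iff] using hab), Finset.card_product, hcZ, sq]
  -- V and its cardinality
  set V : Finset (ZMod p × F) := Finset.univ.filter
    (fun cu : ZMod p × F => cu.2 ≠ 0 ∧ cu.2 ^ 2 = φ cu.1 ∧ cu.2 ^ (p ^ k + 1) = φ cu.1) with hV
  have hequiv : ∀ u : F,
      (∃ c : ZMod p, u ≠ 0 ∧ u ^ 2 = φ c ∧ u ^ (p ^ k + 1) = φ c) ↔ (u ≠ 0 ∧ u ^ p = u) := by
    intro u
    constructor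
    · rintro ⟨c, hu0, h2, hk1⟩
      refine ⟨hu0, ?_⟩
      have hu2 : u ^ 2 ≠ 0 := pow_ne_zero _ hu0
      have hA : u ^ (2 * (p - 1)) = 1 := by
        have hfr : (u ^ 2) ^ p = u ^ 2 := by
          rw [h2, ← map_pow, ZMod.pow_card]
        have h2p : 2 * p = 2 * (p - 1) + 2 := by omega
        rw [← pow_mul, h2p, pow_add] at hfr
        exact mul_right_cancel₀ hu2 (by rw [hfr, one_mul])
      have hB : u ^ (p ^ k - 1) = 1 := by
        have : u ^ (p ^ k + 1) = u ^ 2 := by rw [hk1, h2]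
        have hsplit2 : p ^ k + 1 = (p ^ k - 1) + 2 := by omega
        rw [hsplit2, pow_add] at this
        exact mul_right_cancel₀ hu2 (by rw [this, one_mul])
      have hC : u ^ (p ^ m - 1) = 1 := by
        have := FiniteField.pow_card_sub_one_eq_one u hu0
        rwa [hF] at this
      set g := Nat.gcd (2 * (p - 1)) (Nat.gcd (p ^ k - 1) (p ^ m - 1)) with hg
      have hgu : u ^ g = 1 := pow_gcd_eq_one.2 ⟨hA, pow_gcd_eq_one.2 ⟨hB, hC⟩⟩
      have hd1 : Nat.gcd (p ^ k - 1) (p ^ m - 1) ∣ p ^ e - 1 := by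
        have := aux_gcd_pow_sub_one_dvd p k m hp2 hk
        rwa [Nat.gcd_comm k m, ← he] at this
      have hdvd : g ∣ p - 1 := by
        have h1 : g ∣ Nat.gcd (2 * (p - 1)) (p ^ e - 1) :=
          Nat.dvd_gcd (Nat.gcd_dvd_left _ _) ((Nat.gcd_dvd_right _ _).trans hd1)
        rwa [aux_gcd_two_mul p e hp2 hodd heodd] at h1
      obtain ⟨w, hw⟩ := hdvd
      have hup1 : u ^ (p - 1) = 1 := by rw [hw, pow_mul, hgu, one_pow]
      have hpp : p = (p - 1) + 1 := by omega
      rw [hpp, pow_add, hup1, one_mul, pow_one]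
    · rintro ⟨hu0, hup⟩
      have hup1 : u ^ (p - 1) = 1 := by
        have hpp : p = (p - 1) + 1 := by omega
        rw [hpp, pow_add, pow_one] at hup
        exact mul_right_cancel₀ hu0 (by rw [hup, one_mul])
      obtain ⟨c, hc⟩ : ∃ c : ZMod p, φ c = u ^ 2 := by
        rw [aux_mem_range_iff p F (u ^ 2), ← pow_mul, mul_comm 2 p, pow_mul, hup]
      refine ⟨c, hu0, hc.symm, ?_⟩
      obtain ⟨t, ht⟩ : (p - 1) ∣ (p ^ k - 1) := by
        simpa using Nat.sub_dvd_pow_sub_pow p 1 k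
      have hsplit2 : p ^ k + 1 = (p ^ k - 1) + 2 := by omega
      rw [hsplit2, pow_add, ht, pow_mul, hup1, one_pow, one_mul, hc]
  have hVcard : V.card = p - 1 := by
    have hinjOn : Set.InjOn Prod.snd (V : Set (ZMod p × F)) := by
      rintro ⟨c₁, u₁⟩ h₁ ⟨c₂, u₂⟩ h₂ hsnd
      simp only [hV, Finset.coe_filter, Set.mem_setOf_eq] at h₁ h₂
      simp only at hsnd
      subst hsnd
      have : φ c₁ = φ c₂ := by rw [← h₁.2.2.1, ← h₂.2.2.1]
      rw [hinj this]
    have himg : V.image Prod.snd =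
        Finset.univ.filter (fun u : F => u ≠ 0 ∧ u ^ p = u) := by
      ext u
      simp only [Finset.mem_image, hV, Finset.mem_filter, Finset.mem_univ, true_and]
      constructor
      · rintro ⟨⟨c, u'⟩, ⟨h1, h2, h3⟩, rfl⟩
        exact (hequiv u').1 ⟨c, h1, h2, h3⟩
      · intro h
        obtain ⟨c, h1, h2, h3⟩ := (hequiv u).2 h
        exact ⟨(c, u), ⟨h1, h2, h3⟩, rfl⟩
    have hWcard : (Finset.univ.filter (fun u : F => u ≠ 0 ∧ u ^ p = u)).card = p - 1 := by
      have hWA : Finset.univ.filter (fun u : F => u ≠ 0 ∧ u ^ p = u) =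
          (Finset.univ.image φ).erase 0 := by
        ext z
        simp only [Finset.mem_filter, Finset.mem_univ, true_and, Finset.mem_erase,
          Finset.mem_image]
        rw [← aux_mem_range_iff p F z]
      rw [hWA, Finset.card_erase_of_mem (Finset.mem_image.mpr ⟨0, Finset.mem_univ _, map_zero φ⟩),
        Finset.card_image_of_injective _ hinj, Finset.card_univ, ZMod.card]
    rw [← hWcard, ← himg, Finset.card_image_of_injOn hinjOn]
  -- the nonzero part via bijection
  have h1 : (Finset.univ.filter (fun v => P v ∧ ¬ v.2.2.2 = 0)).card =
      (p - 1) * ((p - 1) * (p ^ m - 1)) := by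
    have hbij : (Finset.univ.filter (fun v => P v ∧ ¬ v.2.2.2 = 0)).card =
        ((Finset.univ.filter (fun y : ZMod p => y ≠ 0)) ×ˢ
          (V ×ˢ (Finset.univ.filter (fun x : F => x ≠ 0)))).card := by
      refine Finset.card_bij'
        (fun v _ => (v.1, (v.2.1 / v.1, v.2.2.1 / v.2.2.2), v.2.2.2))
        (fun d _ => (d.1, d.1 * d.2.1.1, d.2.1.2 * d.2.2, d.2.2)) ?_ ?_ ?_ ?_
      · rintro ⟨y₁, y₂, x₁, x₂⟩ hv
        simp only [Finset.mem_filter, Finset.mem_univ, true_and, hP] at hv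
        obtain ⟨⟨hy₁, hy₂, heq1, heq2⟩, hx₂⟩ := hv
        have hφy₁ : φ y₁ ≠ 0 := fun h => hy₁ ((hφ0 _).1 h)
        have hφy₂ : φ y₂ ≠ 0 := fun h => hy₂ ((hφ0 _).1 h)
        have heq1' : φ y₁ * x₁ ^ 2 = φ y₂ * x₂ ^ 2 := sub_eq_zero.1 heq1
        have heq2' : φ y₁ * x₁ ^ (p ^ k + 1) = φ y₂ * x₂ ^ (p ^ k + 1) :=
          sub_eq_zero.1 heq2
        have hx₁ : x₁ ≠ 0 := by
          intro h
          rw [h] at heq1'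
          have : φ y₂ * x₂ ^ 2 = 0 := by rw [← heq1']; ring
          rcases mul_eq_zero.1 this with h' | h'
          · exact hφy₂ h'
          · exact hx₂ ((pow_eq_zero_iff (by norm_num)).1 h')
        simp only [Finset.mem_product, Finset.mem_filter, Finset.mem_univ, true_and, hV]
        refine ⟨hy₁, ⟨div_ne_zero hx₁ hx₂, ?_, ?_⟩, hx₂⟩
        · rw [div_pow, map_div₀, div_eq_div_iff (pow_ne_zero _ hx₂) hφy₁]
          linear_combination heq1'
        · rw [div_pow, map_div₀, div_eq_div_iff (pow_ne_zero _ hx₂) hφy₁]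
          linear_combination heq2'
      · rintro ⟨y₁, ⟨c, u⟩, x₂⟩ hd
        simp only [Finset.mem_product, Finset.mem_filter, Finset.mem_univ, true_and, hV] at hd
        obtain ⟨hy₁, ⟨hu0, h2, hk1⟩, hx₂⟩ := hd
        have hc0 : c ≠ 0 := by
          intro h
          rw [h, map_zero] at h2
          exact pow_ne_zero 2 hu0 h2
        simp only [Finset.mem_filter, Finset.mem_univ, true_and, hP]
        refine ⟨⟨hy₁, mul_ne_zero hy₁ hc0, ?_, ?_⟩, hx₂⟩
        · rw [map_mul]
          linear_combination (φ y₁ * x₂ ^ 2) * h2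
        · rw [map_mul]
          linear_combination (φ y₁ * x₂ ^ (p ^ k + 1)) * hk1
      · rintro ⟨y₁, y₂, x₁, x₂⟩ hv
        simp only [Finset.mem_filter, Finset.mem_univ, true_and, hP] at hv
        obtain ⟨⟨hy₁, hy₂, _, _⟩, hx₂⟩ := hv
        have e2 : y₁ * (y₂ / y₁) = y₂ := mul_div_cancel₀ _ hy₁
        have e3 : x₁ / x₂ * x₂ = x₁ := div_mul_cancel₀ _ hx₂
        simp [e2, e3]
      · rintro ⟨y₁, ⟨c, u⟩, x₂⟩ hd
        simp only [Finset.mem_product, Finset.mem_filter, Finset.mem_univ, true_and, hV] at hd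
        obtain ⟨hy₁, _, hx₂⟩ := hd
        have e2 : y₁ * c / y₁ = c := by
          rw [mul_comm]; exact mul_div_cancel_right₀ _ hy₁
        have e3 : u * x₂ / x₂ = u := mul_div_cancel_right₀ _ hx₂
        simp [e2, e3]
    rw [hbij, Finset.card_product, Finset.card_product, hcZ, hcF, hVcard]
  -- final arithmetic
  rw [← hsplit, h0, h1]
  obtain ⟨t, ht⟩ : ∃ t, p ^ m = t + 1 := ⟨p ^ m - 1, by omega⟩
  rw [ht]
  simp only [Nat.add_sub_cancel]
  ring
end

section
/- Suppose k is even and e is odd, and let λ be a fixed nonsquare in GF(q). Then the set S₂ = {(y₁,y₂,x₁,x₂) ∈ GF(p)^* × GF(p)^* × GF(p^m) × GF(p^m) : y₁x₁² + λy₂x₂² = 0 and y₁x₁^{p^k+1} − λy₂x₂^{p^k+1} = 0} has cardinality (p−1)². -/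
/-- If `a^(p^k-1) = 1` and `a^(p^m-1) = 1` then `a^(p^gcd(m,k)-1) = 1`. -/
lemma stmt12_aux {F : Type*} [Monoid F] (p k m : ℕ) (hp : 2 ≤ p)
    (hk : 0 < k) (hm : 0 < m) (a : F)
    (h1 : a ^ (p ^ k - 1) = 1) (h2 : a ^ (p ^ m - 1) = 1) :
    a ^ (p ^ Nat.gcd m k - 1) = 1 := by
  have hpm : 2 ≤ p ^ m := le_trans hp (Nat.le_self_pow hm.ne' p)
  have hfin : IsOfFinOrder a := isOfFinOrder_iff_pow_eq_one.2 ⟨p ^ m - 1, by omega, h2⟩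
  set d := orderOf a with hd
  have hdpos : 0 < d := hfin.orderOf_pos
  haveI : NeZero d := ⟨hdpos.ne'⟩
  have hdk : d ∣ p ^ k - 1 := orderOf_dvd_of_pow_eq_one h1
  have hdm : d ∣ p ^ m - 1 := orderOf_dvd_of_pow_eq_one h2
  -- work in ZMod d
  have cast1 : ∀ n : ℕ, 0 < n → d ∣ p ^ n - 1 → (p : ZMod d) ^ n = 1 := by
    intro n hn hdvd
    have h1n : 1 ≤ p ^ n := Nat.one_le_pow _ _ (by omega)
    have : ((p ^ n - 1 : ℕ) : ZMod d) = 0 := (ZMod.natCast_eq_zero_iff _ _).2 hdvd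
    rw [Nat.cast_sub h1n, Nat.cast_pow, Nat.cast_one, sub_eq_zero] at this
    exact this
  have hk1 : (p : ZMod d) ^ k = 1 := cast1 k hk hdk
  have hm1 : (p : ZMod d) ^ m = 1 := cast1 m hm hdm
  have hord : orderOf (p : ZMod d) ∣ Nat.gcd m k :=
    Nat.dvd_gcd (orderOf_dvd_of_pow_eq_one hm1) (orderOf_dvd_of_pow_eq_one hk1)
  have he1 : (p : ZMod d) ^ Nat.gcd m k = 1 := orderOf_dvd_iff_pow_eq_one.1 hord
  have hgcdpos : 0 < Nat.gcd m k := Nat.gcd_pos_of_pos_left _ hm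
  have h1e : 1 ≤ p ^ Nat.gcd m k := Nat.one_le_pow _ _ (by omega)
  have : ((p ^ Nat.gcd m k - 1 : ℕ) : ZMod d) = 0 := by
    rw [Nat.cast_sub h1e, Nat.cast_pow, Nat.cast_one, sub_eq_zero, he1]
  have hdvd : d ∣ p ^ Nat.gcd m k - 1 := (ZMod.natCast_eq_zero_iff _ _).1 this
  exact orderOf_dvd_iff_pow_eq_one.1 hdvd

/-- Let `p` be an odd prime, `m, k` positive, `e = gcd(m,k)`, `s = m/e`
odd with `s ≥ 3`, `q = p^e`.  Suppose `k` is even and `e` is odd, and let `λ` be a fixed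
nonsquare in `GF(q) ⊆ F = GF(p^m)` (the subfield of solutions of `x^{p^e} = x`).  Then
the set
`S₂ = {(y₁,y₂,x₁,x₂) ∈ GF(p)^* × GF(p)^* × GF(p^m) × GF(p^m) :
  y₁x₁² + λy₂x₂² = 0 and y₁x₁^{p^k+1} - λy₂x₂^{p^k+1} = 0}`
has cardinality `(p-1)²`. -/
theorem stmt_12 (p m k e s : ℕ) [Fact p.Prime] (hodd : Odd p)
    (hm : 0 < m) (hk : 0 < k)
    (he : e = Nat.gcd m k) (hs : s = m / e) (hsodd : Odd s) (hs3 : 3 ≤ s)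
    (hkeven : Even k) (heodd : Odd e)
    (F : Type*) [Field F] [Fintype F] [Algebra (ZMod p) F]
    (hF : Fintype.card F = p ^ m)
    (lam : F) (hlam0 : lam ≠ 0) (hlamq : lam ^ (p ^ e) = lam)
    (hlamns : ¬ ∃ x : F, x ^ (p ^ e) = x ∧ x ^ 2 = lam) :
    Nat.card {v : ZMod p × ZMod p × F × F //
        v.1 ≠ 0 ∧ v.2.1 ≠ 0 ∧
        algebraMap (ZMod p) F v.1 * v.2.2.1 ^ 2
          + lam * (algebraMap (ZMod p) F v.2.1 * v.2.2.2 ^ 2) = 0 ∧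
        algebraMap (ZMod p) F v.1 * v.2.2.1 ^ (p ^ k + 1)
          - lam * (algebraMap (ZMod p) F v.2.1 * v.2.2.2 ^ (p ^ k + 1)) = 0}
      = (p - 1) ^ 2 := by
  have hp := (Fact.out : p.Prime)
  have hp2 : 2 ≤ p := hp.two_le
  have hp3 : 2 < p := by
    rcases hodd with ⟨j, hj⟩
    omega
  haveI : Fact (2 < p) := ⟨hp3⟩
  haveI : CharP F p := charP_of_injective_algebraMap (algebraMap (ZMod p) F).injective p
  have hneg1 : (-1 : F) ≠ 1 := CharP.neg_one_ne_one F p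
  have hpk1 : 1 ≤ p ^ k := Nat.one_le_pow _ _ (by omega)
  -- Parity: p^k - 1 = (p^e - 1) * (2 * N)
  have hek : e ∣ k := he ▸ Nat.gcd_dvd_right m k
  obtain ⟨c, hc⟩ := hek
  have hceven : Even c := by
    rcases Nat.even_or_odd c with h | h
    · exact h
    · exact absurd (hc ▸ heodd.mul h) ((Nat.not_odd_iff_even.2 hkeven))
  obtain ⟨d2, hd2⟩ := hceven
  have hd2' : c = 2 * d2 := by omega
  set r := p ^ e with hr
  have hrodd : Odd r := hodd.pow
  have hr3 : 3 ≤ r := by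
    have he1 : 1 ≤ e := heodd.pos
    have : p ≤ r := Nat.le_self_pow (by omega) p
    omega
  have hpk : p ^ k = r ^ c := by rw [hr, ← pow_mul, ← hc]
  have hdvd1 : r ^ 2 - 1 ∣ r ^ c - 1 := by
    rw [hd2', pow_mul]
    simpa using Nat.sub_dvd_pow_sub_pow (r ^ 2) 1 d2
  obtain ⟨M, hM⟩ := hdvd1
  have hfact : r ^ 2 - 1 = (r - 1) * (r + 1) := by
    have := Nat.sq_sub_sq r 1
    simpa [mul_comm] using this
  obtain ⟨h2, hh2⟩ : ∃ h2, r + 1 = 2 * h2 := by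
    obtain ⟨j, hj⟩ := hrodd; exact ⟨j + 1, by omega⟩
  have hNfact : p ^ k - 1 = (r - 1) * (2 * (h2 * M)) := by
    rw [hpk, hM, hfact, hh2]; ring
  -- Main forcing lemma
  have key : ∀ y₁ y₂ : ZMod p, y₁ ≠ 0 → y₂ ≠ 0 → ∀ x₁ x₂ : F,
      algebraMap (ZMod p) F y₁ * x₁ ^ 2 + lam * (algebraMap (ZMod p) F y₂ * x₂ ^ 2) = 0 →
      algebraMap (ZMod p) F y₁ * x₁ ^ (p ^ k + 1)
        - lam * (algebraMap (ZMod p) F y₂ * x₂ ^ (p ^ k + 1)) = 0 →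
      x₁ = 0 ∧ x₂ = 0 := by
    intro y₁ y₂ hy₁ hy₂ x₁ x₂ heq1 heq2
    set Y₁ := algebraMap (ZMod p) F y₁ with hY₁def
    set Y₂ := algebraMap (ZMod p) F y₂ with hY₂def
    have hY₁ : Y₁ ≠ 0 := (map_ne_zero _).2 hy₁
    have hY₂ : Y₂ ≠ 0 := (map_ne_zero _).2 hy₂
    by_cases hx₂ : x₂ = 0
    · subst hx₂
      simp only [ne_eq, OfNat.ofNat_ne_zero, not_false_eq_true, zero_pow, mul_zero, add_zero] at heq1
      have hx₁ : x₁ ^ 2 = 0 := by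
        rcases mul_eq_zero.1 heq1 with h | h
        · exact absurd h hY₁
        · exact h
      exact ⟨pow_eq_zero_iff (by norm_num) |>.1 hx₁, rfl⟩
    · exfalso
      have hx₁ : x₁ ≠ 0 := by
        rintro rfl
        simp only [ne_eq, OfNat.ofNat_ne_zero, not_false_eq_true, zero_pow, mul_zero,
          zero_add] at heq1
        rcases mul_eq_zero.1 heq1 with h | h
        · exact hlam0 h
        · rcases mul_eq_zero.1 h with h' | h'
          · exact hY₂ h'
          · exact hx₂ (pow_eq_zero_iff (by norm_num) |>.1 h')
      -- derive x₂^(p^k-1) = - x₁^(p^k-1)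
      have hsplit : ∀ x : F, x ^ (p ^ k + 1) = x ^ 2 * x ^ (p ^ k - 1) := by
        intro x
        rw [← pow_add]
        congr 1
        omega
      have heq1' : Y₁ * x₁ ^ 2 = -(lam * (Y₂ * x₂ ^ 2)) := by linear_combination heq1
      have heq2' : Y₁ * x₁ ^ (p ^ k + 1) = lam * (Y₂ * x₂ ^ (p ^ k + 1)) := by
        linear_combination heq2
      have hmain : lam * (Y₂ * x₂ ^ 2) * x₂ ^ (p ^ k - 1)
          = -(lam * (Y₂ * x₂ ^ 2)) * x₁ ^ (p ^ k - 1) := by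
        have := heq2'
        rw [hsplit x₁, hsplit x₂, ← mul_assoc, heq1'] at this
        calc lam * (Y₂ * x₂ ^ 2) * x₂ ^ (p ^ k - 1)
            = lam * (Y₂ * (x₂ ^ 2 * x₂ ^ (p ^ k - 1))) := by ring
          _ = -(lam * (Y₂ * x₂ ^ 2)) * x₁ ^ (p ^ k - 1) := this.symm
      have hcancel : x₂ ^ (p ^ k - 1) = -(x₁ ^ (p ^ k - 1)) := by
        have hne : lam * (Y₂ * x₂ ^ 2) ≠ 0 := by
          apply mul_ne_zero hlam0
          exact mul_ne_zero hY₂ (pow_ne_zero _ hx₂)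
        refine mul_left_cancel₀ hne ?_
        linear_combination hmain
      -- t = x₁ / x₂ satisfies t^(p^k-1) = -1
      set t := x₁ / x₂ with ht
      have htpow : t ^ (p ^ k - 1) = -1 := by
        rw [ht, div_pow, hcancel]
        rw [div_neg, div_self (pow_ne_zero _ hx₁)]
      have ht0 : t ≠ 0 := div_ne_zero hx₁ hx₂
      -- t² satisfies the hypotheses of stmt12_aux
      have ha1 : (t ^ 2) ^ (p ^ k - 1) = 1 := by
        rw [← pow_mul, mul_comm, pow_mul, htpow]; ring
      have ha2 : (t ^ 2) ^ (p ^ m - 1) = 1 := by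
        have := FiniteField.pow_card_sub_one_eq_one (t ^ 2) (pow_ne_zero _ ht0)
        rwa [hF] at this
      have ha : (t ^ 2) ^ (p ^ Nat.gcd m k - 1) = 1 :=
        stmt12_aux p k m hp2 hk hm _ ha1 ha2
      rw [← he] at ha
      -- now t^(p^k-1) = ((t^(p^e-1))^2)^N = 1
      have hu : (t ^ (r - 1)) ^ 2 = 1 := by
        rw [← pow_mul, mul_comm, pow_mul]; exact ha
      have : t ^ (p ^ k - 1) = 1 := by
        rw [hNfact, pow_mul, pow_mul, hu, one_pow]
      rw [htpow] at this
      exact hneg1 this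
  -- Build the equivalence
  have hequiv : {v : ZMod p × ZMod p × F × F //
        v.1 ≠ 0 ∧ v.2.1 ≠ 0 ∧
        algebraMap (ZMod p) F v.1 * v.2.2.1 ^ 2
          + lam * (algebraMap (ZMod p) F v.2.1 * v.2.2.2 ^ 2) = 0 ∧
        algebraMap (ZMod p) F v.1 * v.2.2.1 ^ (p ^ k + 1)
          - lam * (algebraMap (ZMod p) F v.2.1 * v.2.2.2 ^ (p ^ k + 1)) = 0}
      ≃ {y : ZMod p // y ≠ 0} × {y : ZMod p // y ≠ 0} := by
    refine ⟨fun v => (⟨v.1.1, v.2.1⟩, ⟨v.1.2.1, v.2.2.1⟩),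
      fun a => ⟨(a.1.1, a.2.1, 0, 0), a.1.2, a.2.2, by simp, by simp⟩, ?_, ?_⟩
    · rintro ⟨⟨y₁, y₂, x₁, x₂⟩, h1, h2, h3, h4⟩
      obtain ⟨hx₁, hx₂⟩ := key y₁ y₂ h1 h2 x₁ x₂ h3 h4
      subst hx₁; subst hx₂; rfl
    · rintro ⟨⟨y₁, h1⟩, ⟨y₂, h2⟩⟩
      rfl
  rw [Nat.card_congr hequiv, Nat.card_prod]
  have hcard : Nat.card {y : ZMod p // y ≠ 0} = p - 1 := by
    rw [← Nat.card_congr (unitsEquivNeZero (G₀ := ZMod p)), Nat.card_eq_fintype_card,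
      ZMod.card_units_eq_totient, Nat.totient_prime hp]
  rw [hcard, sq]
end

section
/- Suppose k/e is even. Then for every (a,b) ∈ GF(p^m)², the Hamming weight of the codeword c_{(a,b)} satisfies WT(c_{(a,b)}) = p^m − p^{m−1} − S(a,b)/(2p). -/
lemma zetaPow_zero (p : ℕ) [NeZero p] : zetaPow p 0 = 1 := by
  simp [zetaPow]

lemma zetaPow_sum (p : ℕ) [Fact p.Prime] (c : ZMod p) :
    ∑ y : ZMod p, zetaPow p (y * c) = if c = 0 then (p : ℂ) else 0 := by
  have hp : 1 < p := (Fact.out : p.Prime).one_lt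
  have hζ : IsPrimitiveRoot (Complex.exp (2 * Real.pi * Complex.I / p)) p :=
    Complex.isPrimitiveRoot_exp p (by omega)
  set ζ : ℂ := Complex.exp (2 * Real.pi * Complex.I / p) with hζdef
  have key : ∀ t : ZMod p, zetaPow p t = ζ ^ t.val := by
    intro t
    rw [hζdef, ← Complex.exp_nat_mul, zetaPow]
    congr 1
    have : (p : ℂ) ≠ 0 := by exact_mod_cast (by omega : p ≠ 0)
    field_simp
  by_cases hc : c = 0
  · subst hc
    simp only [mul_zero, zetaPow_zero, if_pos rfl, Finset.sum_const, Finset.card_univ,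
      ZMod.card, nsmul_eq_mul, mul_one, if_true]
  · rw [if_neg hc]
    have : ∑ y : ZMod p, zetaPow p (y * c) = ∑ y : ZMod p, zetaPow p y :=
      Equiv.sum_comp (Equiv.mulRight₀ c hc) (fun y => zetaPow p y)
    rw [this]
    have : ∑ y : ZMod p, zetaPow p y = ∑ i ∈ Finset.range p, ζ ^ i := by
      rw [Finset.sum_nbij' (fun (y : ZMod p) => y.val) (fun i => (i : ZMod p))]
      · intro y _; exact Finset.mem_range.mpr (ZMod.val_lt y)
      · intro i _; exact Finset.mem_univ _
      · intro y _; exact (ZMod.natCast_rightInverse y)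
      · intro i hi; exact ZMod.val_cast_of_lt (Finset.mem_range.mp hi)
      · intro y _; exact key y
    rw [this, hζ.geom_sum_eq_zero hp]

lemma sum_range_two_mul (f : ℕ → ℂ) (h : ℕ) :
    ∑ j ∈ Finset.range (2 * h), f j
      = ∑ u ∈ Finset.range h, f (2 * u) + ∑ u ∈ Finset.range h, f (2 * u + 1) := by
  induction h with
  | zero => simp
  | succ h ih =>
      rw [show 2 * (h + 1) = (2 * h) + 1 + 1 by ring, Finset.sum_range_succ,
        Finset.sum_range_succ, ih, Finset.sum_range_succ, Finset.sum_range_succ (fun u => f (2*u+1))]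
      ring

lemma sum_range_rot (f : ℕ → ℂ) (c : ℕ) (hper : ∀ j, f (j + c) = f j) (v : ℕ) :
    ∑ j ∈ Finset.range c, f (v + j) = ∑ j ∈ Finset.range c, f j := by
  induction v with
  | zero => simp
  | succ v ih =>
      have step : ∑ j ∈ Finset.range c, f (v + 1 + j) = ∑ j ∈ Finset.range c, f (v + j) := by
        have h1 : ∑ j ∈ Finset.range (c + 1), f (v + j)
            = ∑ j ∈ Finset.range c, f (v + (j + 1)) + f (v + 0) := Finset.sum_range_succ' _ _
        have h2 : ∑ j ∈ Finset.range (c + 1), f (v + j)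
            = ∑ j ∈ Finset.range c, f (v + j) + f (v + c) := Finset.sum_range_succ _ _
        have h3 : f (v + c) = f (v + 0) := by rw [add_comm v c, add_comm]; simpa using hper v
        have key : ∑ j ∈ Finset.range c, f (v + (j + 1)) = ∑ j ∈ Finset.range c, f (v + j) := by
          rw [← add_right_cancel_iff (a := f (v + 0)), ← h1, h2, h3]
        calc ∑ j ∈ Finset.range c, f (v + 1 + j)
            = ∑ j ∈ Finset.range c, f (v + (j + 1)) := by
              apply Finset.sum_congr rfl; intro j _; congr 1; omega
          _ = ∑ j ∈ Finset.range c, f (v + j) := key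
      rw [step, ih]

/-- The exponential sum
`S(a,b) = Σ_{y ∈ GF(p)^*} Σ_{x ∈ GF(p^m)} ( ζ_p^{Tr(y·a·x² + y·b·x^{p^k+1})}
  + ζ_p^{Tr(-y·a·λ·x² + y·b·λ·x^{p^k+1})} )`,
where `Tr = Tr_{p^m/p}`. -/
noncomputable def Sab (p k : ℕ) [NeZero p] {F : Type*} [Field F] [Fintype F]
    [Algebra (ZMod p) F] (lam a b : F) : ℂ :=
  ∑ y ∈ Finset.univ \ {(0 : ZMod p)}, ∑ x : F,
    (zetaPow p (Algebra.trace (ZMod p) F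
        (algebraMap (ZMod p) F y * a * x ^ 2 + algebraMap (ZMod p) F y * b * x ^ (p ^ k + 1))) +
     zetaPow p (Algebra.trace (ZMod p) F
        (-(algebraMap (ZMod p) F y * a * lam * x ^ 2)
          + algebraMap (ZMod p) F y * b * lam * x ^ (p ^ k + 1))))

/-- The Hamming weight of the codeword
`c_{(a,b)} = ( Tr_{p^m/p}( a·(-π)^t + b·π^{t(p^k+1)/2} ) )_{t=0}^{p^m-2}`. -/
noncomputable def wtC (p m k : ℕ) [NeZero p] {F : Type*} [Field F] [Fintype F]
    [Algebra (ZMod p) F] (π a b : F) : ℕ :=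
  Nat.card {t : Fin (p ^ m - 1) //
    Algebra.trace (ZMod p) F
      (a * (-π) ^ (t : ℕ) + b * π ^ ((t : ℕ) * ((p ^ k + 1) / 2))) ≠ 0}

/-- Let `p` be an odd prime, `m, k` positive, `e = gcd(m,k)`, `s = m/e`
odd with `s ≥ 3`, `π` a primitive element of `F = GF(p^m)`, and `λ` a fixed nonsquare in
`GF(q) ⊆ F` (the subfield of solutions of `x^{p^e} = x`).  Suppose `k/e` is even.  Then
for every `(a,b) ∈ GF(p^m)²`,
`WT(c_{(a,b)}) = p^m - p^{m-1} - S(a,b)/(2p)`. -/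
theorem stmt_14 (p m k e s : ℕ) [Fact p.Prime] (hodd : Odd p)
    (hm : 0 < m) (hk : 0 < k)
    (he : e = Nat.gcd m k) (hs : s = m / e) (hsodd : Odd s) (hs3 : 3 ≤ s)
    (hke : Even (k / e))
    (F : Type*) [Field F] [Fintype F] [Algebra (ZMod p) F]
    (hF : Fintype.card F = p ^ m)
    (π : F) (hπ : orderOf π = p ^ m - 1)
    (lam : F) (hlam0 : lam ≠ 0) (hlamq : lam ^ (p ^ e) = lam)
    (hlamns : ¬ ∃ x : F, x ^ (p ^ e) = x ∧ x ^ 2 = lam)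
    (a b : F) :
    (wtC p m k π a b : ℂ)
      = (p : ℂ) ^ m - (p : ℂ) ^ (m - 1) - Sab p k lam a b / (2 * p) := by
  -- basic numerics
  have hp3 : 3 ≤ p := by
    have h2 : 2 ≤ p := (Fact.out : p.Prime).two_le
    rcases hodd with ⟨c, hc⟩; omega
  have hpm3 : 3 ≤ p ^ m := le_trans hp3 (Nat.le_self_pow hm.ne' p)
  set n : ℕ := p ^ m - 1 with hn
  have hpmodd : Odd (p ^ m) := hodd.pow
  obtain ⟨h, hn2⟩ : ∃ h, n = 2 * h := by rcases hpmodd with ⟨w, hw⟩; exact ⟨w, by omega⟩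
  set d : ℕ := (p ^ k + 1) / 2 with hd
  have hpkodd : Odd (p ^ k) := hodd.pow
  have h2d : 2 * d = p ^ k + 1 := by rcases hpkodd with ⟨w, hw⟩; omega
  classical
  -- powers of π
  have hπn : π ^ n = 1 := hπ ▸ pow_orderOf_eq_one π
  have hπ0 : π ≠ 0 := by
    intro h0
    rw [h0, zero_pow (by omega : n ≠ 0)] at hπn
    exact zero_ne_one hπn
  have hπiff : ∀ i j : ℕ, π ^ i = π ^ j ↔ i % n = j % n := by
    intro i j
    set u : Fˣ := Units.mk0 π hπ0 with hu
    have husval : (u : F) = π := rfl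
    have huord : orderOf u = n := by rw [← orderOf_units, husval, hπ]
    constructor
    · intro hij
      have : u ^ i = u ^ j := Units.ext (by rw [Units.val_pow_eq_pow_val,
        Units.val_pow_eq_pow_val, husval, hij])
      have := pow_eq_pow_iff_modEq.mp this
      rwa [huord] at this
    · intro hij
      have : u ^ i = u ^ j := pow_eq_pow_iff_modEq.mpr (by rw [huord]; exact hij)
      calc π ^ i = ((u ^ i : Fˣ) : F) := by rw [Units.val_pow_eq_pow_val, husval]
        _ = ((u ^ j : Fˣ) : F) := by rw [this]
        _ = π ^ j := by rw [Units.val_pow_eq_pow_val, husval]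
  have hπmod : ∀ i j : ℕ, i % n = j % n → π ^ i = π ^ j := fun i j hij => (hπiff i j).mpr hij
  have hπinj : ∀ i ∈ Finset.range n, ∀ j ∈ Finset.range n, π ^ i = π ^ j → i = j := by
    intro i hi j hj hij
    have h2 := (hπiff i j).mp hij
    rw [Finset.mem_range] at hi hj
    rwa [Nat.mod_eq_of_lt hi, Nat.mod_eq_of_lt hj] at h2
  have himg : (Finset.range n).image (fun j => π ^ j) = Finset.univ \ {(0 : F)} := by
    apply Finset.eq_of_subset_of_card_le
    · intro x hx
      obtain ⟨j, _, rfl⟩ := Finset.mem_image.mp hx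
      exact Finset.mem_sdiff.mpr ⟨Finset.mem_univ _,
        by simp [pow_ne_zero j hπ0]⟩
    · rw [Finset.card_sdiff_of_subset (Finset.subset_univ _), Finset.card_univ, hF,
        Finset.card_singleton, Finset.card_image_of_injOn
          (fun i hi j hj hij => hπinj i hi j hj hij), Finset.card_range]
  have hsum0 : ∀ G : F → ℂ, ∑ x ∈ Finset.univ \ {(0 : F)}, G x
      = ∑ j ∈ Finset.range n, G (π ^ j) := by
    intro G
    rw [← himg, Finset.sum_image hπinj]
  -- lambda is a nonsquare in F
  have hem : e ∣ m := he ▸ Nat.gcd_dvd_left m k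
  have hek : e ∣ k := he ▸ Nat.gcd_dvd_right m k
  have hes : e * s = m := by rw [hs]; exact Nat.mul_div_cancel' hem
  have hqodd : Odd (p ^ e) := hodd.pow
  have h2F : (2 : F) ≠ 0 := by
    have hchar : CharP F p := charP_of_injective_algebraMap
      (algebraMap (ZMod p) F).injective p
    have : ((2 : ℕ) : F) ≠ 0 := by
      rw [Ne, CharP.cast_eq_zero_iff F p]
      intro hdvd
      have := Nat.le_of_dvd (by norm_num) hdvd
      omega
    simpa using this
  have hlns : ¬ ∃ w : F, w ^ 2 = lam := by
    rintro ⟨w, hw⟩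
    have hw0 : w ≠ 0 := by
      rintro rfl
      rw [zero_pow (by norm_num : (2:ℕ) ≠ 0)] at hw
      exact hlam0 hw.symm
    have hsq : (w ^ (p ^ e)) * (w ^ (p ^ e)) = w * w := by
      have : (w ^ (p ^ e)) ^ 2 = w ^ 2 := by
        rw [← pow_mul, mul_comm, pow_mul, hw, hlamq, ← hw]
      simpa [sq] using this
    rcases mul_self_eq_mul_self_iff.mp hsq with h1 | h1
    · exact hlamns ⟨w, h1, hw⟩
    · have hiter : ∀ i : ℕ, w ^ ((p ^ e) ^ i) = (-1) ^ i * w := by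
        intro i
        induction i with
        | zero => simp
        | succ i ih =>
            rw [pow_succ, pow_mul, ih, mul_pow, ← pow_mul, mul_comm i (p ^ e),
              pow_mul, hqodd.neg_one_pow, h1]
            ring
      have hA : w ^ (p ^ m) = w := by rw [← hF]; exact FiniteField.pow_card w
      have hB : w ^ (p ^ m) = -w := by
        rw [← hes, pow_mul, hiter s, hsodd.neg_one_pow, neg_one_mul]
      have : (2 : F) * w = 0 := by linear_combination hB - hA
      rcases mul_eq_zero.mp this with h2 | h2
      · exact h2F h2
      · exact hw0 h2
  -- lam = π ^ l with l odd
  have hlmem : lam ∈ (Finset.range n).image (fun j => π ^ j) := by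
    rw [himg]
    exact Finset.mem_sdiff.mpr ⟨Finset.mem_univ _, by simpa using hlam0⟩
  obtain ⟨l, hlrange, hl⟩ := Finset.mem_image.mp hlmem
  have hlodd : Odd l := by
    rcases Nat.even_or_odd l with hev | hod
    · exfalso
      obtain ⟨v, hv⟩ := hev
      exact hlns ⟨π ^ v, by rw [← pow_mul, show v * 2 = l by omega, hl]⟩
    · exact hod
  -- lam ^ d = lam
  have hld : lam ^ d = lam := by
    obtain ⟨i, hi⟩ := hke
    have hkei : e * (k / e) = k := Nat.mul_div_cancel' hek
    rw [hi] at hkei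
    have hk2ei : 2 * e * i = k := by rw [← hkei]; ring
    have hpkQ : p ^ k = (p ^ (2 * e)) ^ i := by rw [← pow_mul]; congr 1; omega
    obtain ⟨c, hc⟩ := hqodd
    have hl2 : lam ^ (2 * c) = 1 := by
      have h1 : lam ^ (2 * c) * lam = 1 * lam := by
        rw [← pow_succ, one_mul, show 2 * c + 1 = p ^ e by omega, hlamq]
      exact mul_right_cancel₀ hlam0 h1
    obtain ⟨r, hr⟩ := Nat.sub_dvd_pow_sub_pow (p ^ (2 * e)) 1 i
    rw [one_pow] at hr
    have hQc : p ^ (2 * e) = 4 * (c * c) + 4 * c + 1 := by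
      rw [mul_comm 2 e, pow_mul, hc]; ring
    have hQ1 : p ^ (2 * e) - 1 = 4 * (c * c) + 4 * c := by omega
    rw [hQ1] at hr
    have hQi1 : 1 ≤ (p ^ (2 * e)) ^ i :=
      Nat.one_le_pow _ _ (by positivity)
    have hexp : (4 * (c * c) + 4 * c) * r = 4 * ((c * c) * r) + 4 * (c * r) := by ring
    rw [hexp] at hr
    have hQir : (p ^ (2 * e)) ^ i = 4 * ((c * c) * r) + 4 * (c * r) + 1 := by omega
    have hd2 : p ^ k + 1 = 2 * (2 * ((c * c) * r) + 2 * (c * r) + 1) := by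
      rw [hpkQ, hQir]; ring
    have hdval : d = 2 * ((c * c) * r) + 2 * (c * r) + 1 := by
      rw [hd, hd2]; omega
    have hone : lam ^ (2 * ((c * c) * r) + 2 * (c * r)) = 1 := by
      rw [show 2 * ((c * c) * r) + 2 * (c * r) = (2 * c) * (c * r + r) by ring,
        pow_mul, hl2, one_pow]
    rw [hdval, pow_succ, hone, one_mul]
  have hπld : π ^ (l * d) = π ^ l := by
    rw [pow_mul, hl, hld, ← hl]
  -- Step 2: the key reindexing identity
  have step2 : ∀ g : F → ℂ,
      (∑ x ∈ Finset.univ \ {(0 : F)}, g (a * x ^ 2 + b * x ^ (p ^ k + 1)))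
        + (∑ x ∈ Finset.univ \ {(0 : F)}, g (-(a * lam * x ^ 2) + b * lam * x ^ (p ^ k + 1)))
      = 2 * ∑ t ∈ Finset.range n, g (a * (-π) ^ t + b * π ^ (t * d)) := by
    intro g
    set Gp : ℕ → ℂ := fun t => g (a * π ^ t + b * π ^ (t * d)) with hGp
    set Gm : ℕ → ℂ := fun t => g (-(a * π ^ t) + b * π ^ (t * d)) with hGm
    have hperP : ∀ t, Gp (t + n) = Gp t := by
      intro t
      simp only [hGp]
      rw [hπmod (t + n) t (by simp [Nat.add_mod_right]),
        hπmod ((t + n) * d) (t * d) (by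
          rw [show (t + n) * d = t * d + d * n by ring, Nat.add_mul_mod_self_right])]
    have hperM : ∀ t, Gm (t + n) = Gm t := by
      intro t
      simp only [hGm]
      rw [hπmod (t + n) t (by simp [Nat.add_mod_right]),
        hπmod ((t + n) * d) (t * d) (by
          rw [show (t + n) * d = t * d + d * n by ring, Nat.add_mul_mod_self_right])]
    have hSum1 : ∑ x ∈ Finset.univ \ {(0 : F)}, g (a * x ^ 2 + b * x ^ (p ^ k + 1))
        = ∑ j ∈ Finset.range n, Gp (2 * j) := by
      rw [hsum0]
      apply Finset.sum_congr rfl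
      intro j _
      simp only [hGp]
      rw [← pow_mul, ← pow_mul, show j * 2 = 2 * j by ring,
        show j * (p ^ k + 1) = 2 * j * d by rw [← h2d]; ring]
    have hSum1' : ∑ j ∈ Finset.range n, Gp (2 * j)
        = 2 * ∑ u ∈ Finset.range h, Gp (2 * u) := by
      rw [hn2, show 2 * h = h + h by ring, Finset.sum_range_add]
      have : ∀ j, Gp (2 * (h + j)) = Gp (2 * j) := by
        intro j
        rw [show 2 * (h + j) = 2 * j + n by omega]
        exact hperP (2 * j)
      rw [Finset.sum_congr rfl (fun j _ => this j)]
      ring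
    have hSum2 : ∑ x ∈ Finset.univ \ {(0 : F)}, g (-(a * lam * x ^ 2) + b * lam * x ^ (p ^ k + 1))
        = ∑ j ∈ Finset.range n, Gm (l + 2 * j) := by
      rw [hsum0]
      apply Finset.sum_congr rfl
      intro j _
      simp only [hGm]
      have e1 : a * lam * (π ^ j) ^ 2 = a * π ^ (l + 2 * j) := by
        rw [pow_add, ← pow_mul, ← hl, show j * 2 = 2 * j by ring]
        ring
      have e2 : b * lam * (π ^ j) ^ (p ^ k + 1) = b * π ^ ((l + 2 * j) * d) := by
        have hsplit : π ^ ((l + 2 * j) * d) = π ^ (l * d) * π ^ (j * (p ^ k + 1)) := by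
          rw [← pow_add]
          congr 1
          rw [← h2d]; ring
        rw [hsplit, hπld, ← hl, pow_mul]
        ring
      rw [e1, e2]
    have hSum2' : ∑ j ∈ Finset.range n, Gm (l + 2 * j)
        = 2 * ∑ u ∈ Finset.range h, Gm (2 * u + 1) := by
      obtain ⟨v, hv⟩ := hlodd
      have hH : ∀ j, Gm (l + 2 * j) = (fun u => Gm (2 * u + 1)) (v + j) := by
        intro j; simp only; congr 1; omega
      rw [Finset.sum_congr rfl (fun j _ => hH j)]
      have hperH : ∀ u, Gm (2 * (u + h) + 1) = Gm (2 * u + 1) := by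
        intro u
        rw [show 2 * (u + h) + 1 = (2 * u + 1) + n by omega]
        exact hperM (2 * u + 1)
      rw [hn2, show 2 * h = h + h by ring, Finset.sum_range_add]
      have hshift : ∀ j, (fun u => Gm (2 * u + 1)) (v + (h + j))
          = (fun u => Gm (2 * u + 1)) (v + j) := by
        intro j
        simp only
        rw [show v + (h + j) = (v + j) + h by omega]
        exact hperH (v + j)
      rw [Finset.sum_congr rfl (fun j _ => hshift j),
        sum_range_rot (fun u => Gm (2 * u + 1)) h hperH v]
      ring
    have hW : ∑ t ∈ Finset.range n, g (a * (-π) ^ t + b * π ^ (t * d))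
        = ∑ u ∈ Finset.range h, Gp (2 * u) + ∑ u ∈ Finset.range h, Gm (2 * u + 1) := by
      rw [hn2, sum_range_two_mul]
      congr 1
      · apply Finset.sum_congr rfl
        intro u _
        simp only [hGp]
        congr 3
        rw [pow_mul, neg_sq, ← pow_mul]
      · apply Finset.sum_congr rfl
        intro u _
        simp only [hGm]
        have : (-π) ^ (2 * u + 1) = -(π ^ (2 * u + 1)) :=
          Odd.neg_pow ⟨u, by omega⟩ π
        rw [this]
        congr 1
        ring
    rw [hSum1, hSum1', hSum2, hSum2', hW]
    ring
  -- trace linearity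
  have hchi : ∀ (y : ZMod p) (u : F),
      Algebra.trace (ZMod p) F (algebraMap (ZMod p) F y * u)
        = y * Algebra.trace (ZMod p) F u := by
    intro y u
    rw [← Algebra.smul_def, map_smul, smul_eq_mul]
  set cc : ℕ → ZMod p :=
    fun t => Algebra.trace (ZMod p) F (a * (-π) ^ t + b * π ^ (t * d)) with hcc
  set N0 : ℕ := ((Finset.range n).filter (fun t => cc t = 0)).card with hN0
  set N1 : ℕ := ((Finset.range n).filter (fun t => ¬ cc t = 0)).card with hN1
  have hNsum : N0 + N1 = n := by
    rw [hN0, hN1, Finset.card_filter_add_card_filter_not, Finset.card_range]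
  have hwt : wtC p m k π a b = N1 := by
    unfold wtC
    rw [Nat.card_eq_fintype_card, Fintype.card_subtype]
    simp only [← hn, ← hd, ne_eq]
    rw [hN1, Finset.card_filter, Finset.card_filter]
    exact Fin.sum_univ_eq_sum_range (fun t => if ¬ cc t = 0 then 1 else 0) n
  have horth : ∀ cv : ZMod p, ∑ y ∈ Finset.univ \ {(0 : ZMod p)}, zetaPow p (y * cv)
      = (if cv = 0 then (p : ℂ) else 0) - 1 := by
    intro cv
    rw [Finset.sum_sdiff_eq_sub (Finset.subset_univ _), zetaPow_sum, Finset.sum_singleton,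
      zero_mul, zetaPow_zero]
  have hSab : Sab p k lam a b = 2 * ((p : ℂ) - 1) + 2 * ((p : ℂ) * N0 - n) := by
    unfold Sab
    have hyterm : ∀ y : ZMod p,
        (∑ x : F, (zetaPow p (Algebra.trace (ZMod p) F
            (algebraMap (ZMod p) F y * a * x ^ 2
              + algebraMap (ZMod p) F y * b * x ^ (p ^ k + 1)))
          + zetaPow p (Algebra.trace (ZMod p) F
            (-(algebraMap (ZMod p) F y * a * lam * x ^ 2)
              + algebraMap (ZMod p) F y * b * lam * x ^ (p ^ k + 1)))))
        = 2 + 2 * ∑ t ∈ Finset.range n, zetaPow p (y * cc t) := by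
      intro y
      rw [Finset.sum_eq_sum_sdiff_singleton_add (Finset.mem_univ (0 : F))]
      have hzero : (zetaPow p (Algebra.trace (ZMod p) F
            (algebraMap (ZMod p) F y * a * (0:F) ^ 2
              + algebraMap (ZMod p) F y * b * (0:F) ^ (p ^ k + 1)))
          + zetaPow p (Algebra.trace (ZMod p) F
            (-(algebraMap (ZMod p) F y * a * lam * (0:F) ^ 2)
              + algebraMap (ZMod p) F y * b * lam * (0:F) ^ (p ^ k + 1)))) = 2 := by
        rw [zero_pow (by norm_num : (2:ℕ) ≠ 0), zero_pow (Nat.succ_ne_zero _)]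
        simp only [mul_zero, neg_zero, add_zero, zero_add, map_zero, zetaPow_zero]
        norm_num
      rw [hzero, Finset.sum_add_distrib]
      set g : F → ℂ :=
        fun u => zetaPow p (Algebra.trace (ZMod p) F (algebraMap (ZMod p) F y * u)) with hg
      have hA : ∑ x ∈ Finset.univ \ {(0:F)}, zetaPow p (Algebra.trace (ZMod p) F
            (algebraMap (ZMod p) F y * a * x ^ 2
              + algebraMap (ZMod p) F y * b * x ^ (p ^ k + 1)))
          = ∑ x ∈ Finset.univ \ {(0:F)}, g (a * x ^ 2 + b * x ^ (p ^ k + 1)) := by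
        apply Finset.sum_congr rfl
        intro x _
        simp only [hg]
        congr 2
        ring
      have hB : ∑ x ∈ Finset.univ \ {(0:F)}, zetaPow p (Algebra.trace (ZMod p) F
            (-(algebraMap (ZMod p) F y * a * lam * x ^ 2)
              + algebraMap (ZMod p) F y * b * lam * x ^ (p ^ k + 1)))
          = ∑ x ∈ Finset.univ \ {(0:F)},
              g (-(a * lam * x ^ 2) + b * lam * x ^ (p ^ k + 1)) := by
        apply Finset.sum_congr rfl
        intro x _
        simp only [hg]
        congr 2
        ring
      rw [hA, hB, step2 g]
      have hgc : ∀ t, g (a * (-π) ^ t + b * π ^ (t * d)) = zetaPow p (y * cc t) := by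
        intro t
        simp only [hg, hcc]
        rw [hchi]
      rw [Finset.sum_congr rfl (fun t _ => hgc t)]
      ring
    rw [Finset.sum_congr rfl (fun y _ => hyterm y), Finset.sum_add_distrib,
      Finset.sum_const, ← Finset.mul_sum, Finset.sum_comm]
    have hcard : (Finset.univ \ {(0 : ZMod p)}).card = p - 1 := by
      rw [Finset.card_sdiff_of_subset (Finset.subset_univ _), Finset.card_univ, ZMod.card,
        Finset.card_singleton]
    rw [hcard, Finset.sum_congr rfl (fun t _ => horth (cc t)), Finset.sum_sub_distrib,
      Finset.sum_const, Finset.card_range]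
    have hite : ∑ t ∈ Finset.range n, (if cc t = 0 then (p : ℂ) else 0) = (N0 : ℂ) * p := by
      rw [← Finset.sum_filter, Finset.sum_const, hN0]
      simp [mul_comm]
    rw [hite]
    have hpc : ((p - 1 : ℕ) : ℂ) = (p : ℂ) - 1 := by
      push_cast [Nat.cast_sub (by omega : 1 ≤ p)]
      ring
    simp only [nsmul_eq_mul, hpc, smul_eq_mul, mul_one]
    ring
  have hN1c : (N1 : ℂ) = (n : ℂ) - N0 := by
    have hc : (N0 : ℂ) + N1 = n := by exact_mod_cast congrArg (Nat.cast : ℕ → ℂ) hNsum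
    linear_combination hc
  have hnc : (n : ℂ) = (p : ℂ) ^ m - 1 := by
    rw [hn]
    push_cast [Nat.cast_sub (by omega : 1 ≤ p ^ m)]
    ring
  have hp0 : (p : ℂ) ≠ 0 := by exact_mod_cast (by omega : p ≠ 0)
  have hpm1 : (p : ℂ) ^ (m - 1) = (p : ℂ) ^ m / p := by
    rw [eq_div_iff hp0, ← pow_succ]
    congr 1
    omega
  rw [hwt, hN1c, hSab, hnc, hpm1]
  field_simp
  ring
end

section
/- Let k be an even positive integer and m an odd positive integer. Then gcd( (3^k + 1)/2, 3^m − 1 ) = 1. -/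
/-- Let `k` be an even positive integer and `m` an odd positive
integer.  Then `gcd((3^k + 1)/2, 3^m - 1) = 1`. -/
theorem stmt_19 (k m : ℕ) (hk : 0 < k) (hkeven : Even k)
    (hm : 0 < m) (hmodd : Odd m) :
    Nat.gcd ((3 ^ k + 1) / 2) (3 ^ m - 1) = 1 := by
  set d := Nat.gcd ((3 ^ k + 1) / 2) (3 ^ m - 1) with hd
  -- 3^k ≡ 1 mod 4, so (3^k+1)/2 is odd
  obtain ⟨j, rfl⟩ := hkeven
  have h9 : 3 ^ (j + j) = 9 ^ j := by
    rw [pow_add, ← mul_pow]; norm_num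
  have h4 : 3 ^ (j + j) % 4 = 1 := by
    rw [h9, Nat.pow_mod]
    simp
  have hodd : Odd ((3 ^ (j + j) + 1) / 2) := by
    obtain ⟨q, hq⟩ : ∃ q, 3 ^ (j + j) = 4 * q + 1 := ⟨3 ^ (j + j) / 4, by omega⟩
    rw [hq]
    refine ⟨q, by omega⟩
  have hd1 : d ∣ (3 ^ (j + j) + 1) / 2 := Nat.gcd_dvd_left _ _
  have hd2 : d ∣ 3 ^ m - 1 := Nat.gcd_dvd_right _ _
  have hdodd : Odd d := hodd.of_dvd_nat hd1
  have hpow : 1 ≤ 3 ^ m := Nat.one_le_pow _ _ (by norm_num)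
  -- move to ℤ
  have hz1 : (d : ℤ) ∣ 3 ^ (j + j) + 1 := by
    have : d ∣ 3 ^ (j + j) + 1 := hd1.trans ⟨2, by omega⟩
    exact_mod_cast Int.natCast_dvd_natCast.mpr this
  have hz2 : (d : ℤ) ∣ 3 ^ m - 1 := by
    have := Int.natCast_dvd_natCast.mpr hd2
    rwa [Nat.cast_sub hpow, Nat.cast_pow, Nat.cast_one] at this
    
  have ha : (d : ℤ) ∣ 3 ^ ((j + j) * m) + 1 := by
    have h := Odd.add_dvd_pow_add_pow (3 ^ (j + j) : ℤ) 1 hmodd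
    rw [one_pow, ← pow_mul] at h
    exact hz1.trans h
  have hb : (d : ℤ) ∣ 3 ^ ((j + j) * m) - 1 := by
    have h := sub_dvd_pow_sub_pow (3 ^ m : ℤ) 1 (j + j)
    rw [one_pow, ← pow_mul, mul_comm] at h
    exact hz2.trans h
  have h2 : (d : ℤ) ∣ 2 := by
    have := dvd_sub ha hb
    simpa using this
  have h2n : d ∣ 2 := by exact_mod_cast h2
  have := (Nat.dvd_prime Nat.prime_two).mp h2n
  rcases hdodd with ⟨t, ht⟩
  omega
end
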